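/- arXiv:1304.6593 — 3 statements merged into one kernel-verified Lean document; each statement's English description precedes it below -/
import Mathlib

section
/- Let (V,E) be a tree with |V| ≥ 2 and consider a metric weighted link instance on it with parameter p. If there exists at least one feasible link set, then there exists an optimal (minimum-cost feasible) link set F such that every node incident to a link of F is a corner node, i.e., a leaf or a node of degree at least 3 in the tree. -/
open scoped Classical ENNReal

/-- `e` is an edge of the (unique) `a`–`b` path in the graph `G`: `a` and `b` are
connected and every `a`–`b` walk traverses `e`.  (In a tree this says exactly that
`e` lies on the unique path `P(a,b)`.) -/
def OnPath {V : Type*} (G : SimpleGraph V) (a b : V) (e : Sym2 V) : Prop :=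
  G.Reachable a b ∧ ∀ w : G.Walk a b, e ∈ w.edges

/-- A link `(u, v, t)` is valid for parameter `p`: its endpoints are distinct and its
weight `t` satisfies `1 ≤ t ≤ p`. -/
def ValidLink {V : Type*} (p : ℕ) (l : V × V × ℕ) : Prop :=
  l.1 ≠ l.2.1 ∧ 1 ≤ l.2.2 ∧ l.2.2 ≤ p

/-- The link `f = (x, y, t')` is a shadow of the link `e = (u, v, t)`:
`t' ≥ t` and `P(x,y) ⊆ P(u,v)`. -/
def IsShadow {V : Type*} (G : SimpleGraph V) (f e : V × V × ℕ) : Prop :=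
  e.2.2 ≤ f.2.2 ∧ ∀ ed : Sym2 V, OnPath G f.1 f.2.1 ed → OnPath G e.1 e.2.1 ed

/-- The weighted link instance `c` on the tree `G` with parameter `p` is metric:
(i) `c f ≤ c e` whenever the link `f` is a shadow of the link `e`;
(ii) the triangle inequalities `c (u,z,t₃) ≤ c (u,v,t₁) + c (v,z,t₂)` hold whenever
`t₃ ≥ t₁ + t₂`. -/
def IsMetricInstance {V : Type*} (G : SimpleGraph V) (p : ℕ)
    (c : V → V → ℕ → ℝ≥0∞) : Prop :=
  (∀ e f : V × V × ℕ, ValidLink p e → ValidLink p f → IsShadow G f e →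
      c f.1 f.2.1 f.2.2 ≤ c e.1 e.2.1 e.2.2) ∧
  (∀ u v z : V, ∀ t₁ t₂ t₃ : ℕ, u ≠ v → v ≠ z → u ≠ z →
      1 ≤ t₁ → 1 ≤ t₂ → t₃ ≤ p → t₁ + t₂ ≤ t₃ →
      c u z t₃ ≤ c u v t₁ + c v z t₂)

/-- A link set `F` is feasible: all links are valid, the total weight is at most `p`,
and the union of the paths `P(u,v)` over the links `(u,v,t) ∈ F` equals the edge set
of the tree. -/
def Feasible {V : Type*} (G : SimpleGraph V) (p : ℕ) (F : Finset (V × V × ℕ)) : Prop :=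
  (∀ l ∈ F, ValidLink p l) ∧ (∑ l ∈ F, l.2.2) ≤ p ∧
    {e : Sym2 V | ∃ l ∈ F, OnPath G l.1 l.2.1 e} = G.edgeSet

/-- The total cost of a link set. -/
noncomputable def linkCost {V : Type*} (c : V → V → ℕ → ℝ≥0∞)
    (F : Finset (V × V × ℕ)) : ℝ≥0∞ :=
  ∑ l ∈ F, c l.1 l.2.1 l.2.2

section Pth
variable {V : Type*} {G : SimpleGraph V} (hT : G.IsTree)

noncomputable def pth (u v : V) : G.Walk u v := (hT.existsUnique_path u v).choose

lemma pth_isPath (u v : V) : (pth hT u v).IsPath := (hT.existsUnique_path u v).choose_spec.1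

lemma pth_unique {u v : V} {q : G.Walk u v} (hq : q.IsPath) : q = pth hT u v :=
  (hT.existsUnique_path u v).choose_spec.2 q hq

lemma onPath_iff {u v : V} {e : Sym2 V} : OnPath G u v e ↔ e ∈ (pth hT u v).edges := by
  constructor
  · rintro ⟨-, h⟩; exact h _
  · intro he
    refine ⟨⟨pth hT u v⟩, fun w => ?_⟩
    have hb : w.bypass = pth hT u v := pth_unique hT w.bypass_isPath
    exact w.edges_bypass_subset (hb ▸ he)

lemma onPath_edgeSet {u v : V} {e : Sym2 V} (h : OnPath G u v e) : e ∈ G.edgeSet := by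
  obtain ⟨⟨w⟩, h2⟩ := h
  exact w.edges_subset_edgeSet (h2 w)

lemma pth_reverse (u v : V) : (pth hT u v).reverse = pth hT v u :=
  pth_unique hT (pth_isPath hT u v).reverse

include hT in
lemma onPath_symm {u v : V} {e : Sym2 V} (h : OnPath G u v e) : OnPath G v u e := by
  rw [onPath_iff hT] at h ⊢
  rw [← pth_reverse hT u v, SimpleGraph.Walk.edges_reverse, List.mem_reverse]
  exact h

lemma start_edge {u v : V} {P : G.Walk u v} (hP : P.IsPath) {e f : Sym2 V}
    (he : e ∈ P.edges) (hue : u ∈ e) (hf : f ∈ P.edges) (huf : u ∈ f) : e = f := by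
  cases P with
  | nil => simp at he
  | @cons _ b _ h tl =>
    rw [SimpleGraph.Walk.cons_isPath_iff] at hP
    have key : ∀ g : Sym2 V, g ∈ (SimpleGraph.Walk.cons h tl).edges → u ∈ g →
        g = s(u, b) := by
      intro g hg hug
      rw [SimpleGraph.Walk.edges_cons, List.mem_cons] at hg
      rcases hg with hg | hg
      · exact hg
      · exfalso
        induction g using Sym2.inductionOn with
        | hf a b =>
          rcases Sym2.mem_iff.1 hug with rfl | rfl
          · exact hP.2 (tl.fst_mem_support_of_mem_edges hg)
          · exact hP.2 (tl.snd_mem_support_of_mem_edges hg)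
    rw [key e he hue, key f hf huf]

lemma path_cons {u v : V} (P : G.Walk u v) (hne : u ≠ v) :
    ∃ (w : V) (h : G.Adj u w) (tl : G.Walk w v), P = SimpleGraph.Walk.cons h tl := by
  cases P with
  | nil => exact absurd rfl hne
  | cons h tl => exact ⟨_, h, tl, rfl⟩

end Pth

section Sums
variable {α : Type*} [DecidableEq α]

lemma sum_ie_le {M : Type*} [AddCommMonoid M] [PartialOrder M] [IsOrderedAddMonoid M] [CanonicallyOrderedAdd M] {F : Finset α} {l l' : α}
    (hl : l ∈ F) (f : α → M) (hle : f l' ≤ f l) :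
    ∑ x ∈ insert l' (F.erase l), f x ≤ ∑ x ∈ F, f x := by
  by_cases h : l' ∈ F.erase l
  · rw [Finset.insert_eq_self.2 h]
    exact Finset.sum_le_sum_of_subset (F.erase_subset l)
  · rw [Finset.sum_insert h, ← Finset.add_sum_erase F f hl]
    exact add_le_add hle le_rfl

lemma sum_ie_lt {F : Finset α} {l l' : α} (hl : l ∈ F) (f : α → ℕ) (hlt : f l' < f l) :
    ∑ x ∈ insert l' (F.erase l), f x < ∑ x ∈ F, f x := by
  rw [← Finset.add_sum_erase F f hl]
  by_cases h : l' ∈ F.erase l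
  · rw [Finset.insert_eq_self.2 h]; omega
  · rw [Finset.sum_insert h]; omega

lemma sum_ie2_le {M : Type*} [AddCommMonoid M] [PartialOrder M] [IsOrderedAddMonoid M] [CanonicallyOrderedAdd M] {F : Finset α} {l g l' : α}
    (hl : l ∈ F) (hg : g ∈ F.erase l) (f : α → M) (hle : f l' ≤ f g + f l) :
    ∑ x ∈ insert l' ((F.erase l).erase g), f x ≤ ∑ x ∈ F, f x := by
  rw [← Finset.add_sum_erase F f hl, ← Finset.add_sum_erase _ f hg, ← add_assoc, add_comm (f l)]
  by_cases h : l' ∈ (F.erase l).erase g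
  · rw [Finset.insert_eq_self.2 h]
    exact le_add_self
  · rw [Finset.sum_insert h]
    exact add_le_add hle le_rfl

lemma sum_ie2_lt {F : Finset α} {l g l' : α} (hl : l ∈ F) (hg : g ∈ F.erase l)
    (f : α → ℕ) (hlt : f l' < f g + f l) :
    ∑ x ∈ insert l' ((F.erase l).erase g), f x < ∑ x ∈ F, f x := by
  rw [← Finset.add_sum_erase F f hl, ← Finset.add_sum_erase _ f hg]
  by_cases h : l' ∈ (F.erase l).erase g
  · rw [Finset.insert_eq_self.2 h]; omega
  · rw [Finset.sum_insert h]; omega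

end Sums

noncomputable def mea {V : Type*} {G : SimpleGraph V} (hT : G.IsTree)
    (F : Finset (V × V × ℕ)) : ℕ :=
  ∑ l ∈ F, (1 + (pth hT l.1 l.2.1).length)

section Main
variable {V : Type*} [Fintype V] {G : SimpleGraph V} [DecidableRel G.Adj]

lemma deg_two_setup {u w : V} (hdeg : G.degree u = 2) (hw : G.Adj u w) :
    ∃ w', G.Adj u w' ∧ w' ≠ w ∧ ∀ z, G.Adj u z → z = w ∨ z = w' := by
  have hcard : (G.neighborFinset u).card = 2 := hdeg
  obtain ⟨w', hw'mem, hne⟩ :=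
    Finset.exists_mem_ne (by rw [hcard]; norm_num) w
  have hadj' : G.Adj u w' := by rwa [← SimpleGraph.mem_neighborFinset]
  have heq : ({w, w'} : Finset V) = G.neighborFinset u := by
    apply Finset.eq_of_subset_of_card_le
    · intro z hz
      rcases Finset.mem_insert.1 hz with rfl | hz
      · rwa [SimpleGraph.mem_neighborFinset]
      · rwa [Finset.mem_singleton.1 hz]
    · rw [hcard, Finset.card_pair (Ne.symm hne)]
  refine ⟨w', hadj', hne, fun z hz => ?_⟩
  have : z ∈ ({w, w'} : Finset V) := by rw [heq, SimpleGraph.mem_neighborFinset]; exact hz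
  rcases Finset.mem_insert.1 this with rfl | h
  · exact Or.inl rfl
  · exact Or.inr (Finset.mem_singleton.1 h)

variable (hT : G.IsTree) {p : ℕ} {c : V → V → ℕ → ℝ≥0∞}

lemma swap_lemma (hsymm : ∀ u v t, c u v t = c v u t) {F : Finset (V × V × ℕ)}
    (hF : Feasible G p F) {a b : V} {t : ℕ} (h : (a, b, t) ∈ F) :
    Feasible G p (insert (b, a, t) (F.erase (a, b, t))) ∧
      linkCost c (insert (b, a, t) (F.erase (a, b, t))) ≤ linkCost c F ∧
      mea hT (insert (b, a, t) (F.erase (a, b, t))) ≤ mea hT F := by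
  have hval := hF.1 _ h
  refine ⟨⟨?_, ?_, ?_⟩, ?_, ?_⟩
  · intro l hl
    rcases Finset.mem_insert.1 hl with rfl | hl
    · exact ⟨Ne.symm hval.1, hval.2⟩
    · exact hF.1 _ (F.erase_subset _ hl)
  · exact le_trans (sum_ie_le h _ le_rfl) hF.2.1
  · rw [← hF.2.2]
    ext e
    simp only [Set.mem_setOf_eq]
    constructor
    · rintro ⟨l, hl, hOP⟩
      rcases Finset.mem_insert.1 hl with rfl | hl
      · exact ⟨(a, b, t), h, onPath_symm hT hOP⟩
      · exact ⟨l, F.erase_subset _ hl, hOP⟩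
    · rintro ⟨l, hl, hOP⟩
      by_cases hla : l = (a, b, t)
      · subst hla
        exact ⟨(b, a, t), Finset.mem_insert_self _ _, onPath_symm hT hOP⟩
      · exact ⟨l, Finset.mem_insert_of_mem (Finset.mem_erase.2 ⟨hla, hl⟩), hOP⟩
  · exact sum_ie_le h _ (le_of_eq (hsymm b a t))
  · refine sum_ie_le h _ (le_of_eq ?_)
    simp only
    rw [← pth_reverse hT a b, SimpleGraph.Walk.length_reverse]

end Main

set_option linter.unusedSectionVars false

section Main2
variable {V : Type*} [Fintype V] {G : SimpleGraph V} [DecidableRel G.Adj]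
  (hT : G.IsTree) {p : ℕ} {c : V → V → ℕ → ℝ≥0∞}

lemma end_edge {a b : V} {P : G.Walk a b} (hP : P.IsPath) {e f : Sym2 V}
    (he : e ∈ P.edges) (hbe : b ∈ e) (hf : f ∈ P.edges) (hbf : b ∈ f) : e = f := by
  refine start_edge hP.reverse ?_ hbe ?_ hbf <;>
    rw [SimpleGraph.Walk.edges_reverse, List.mem_reverse] <;> assumption

lemma merge_lemma (hmetric : IsMetricInstance G p c) {F : Finset (V × V × ℕ)}
    (hF : Feasible G p F) {u v x : V} {t s : ℕ}
    (hl : (u, v, t) ∈ F) (hg : (x, u, s) ∈ F) (hgl : (x, u, s) ≠ (u, v, t))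
    {w' : V} (hw'Q : s(u, w') ∈ (pth hT x u).edges) (hw'P : s(u, w') ∉ (pth hT u v).edges) :
    ∃ F', Feasible G p F' ∧ linkCost c F' ≤ linkCost c F ∧ mea hT F' < mea hT F := by
  have huv : u ≠ v := (hF.1 _ hl).1
  have hxu : x ≠ u := (hF.1 _ hg).1
  have ht1 : 1 ≤ t := (hF.1 _ hl).2.1
  have hs1 : 1 ≤ s := (hF.1 _ hg).2.1
  set P := pth hT u v with hPdef
  set Q := pth hT x u with hQdef
  -- x ≠ v
  have hxv : x ≠ v := by
    rintro rfl
    have : P.reverse = Q := by rw [hPdef, hQdef, pth_reverse]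
    rw [← this, SimpleGraph.Walk.edges_reverse, List.mem_reverse] at hw'Q
    exact hw'P hw'Q
  -- first edge of P
  obtain ⟨w, hadj, tl, hPeq⟩ := path_cons P huv
  have hswP : s(u, w) ∈ P.edges := by rw [hPeq]; exact List.mem_cons_self
  -- s(u,w) ∉ Q.edges
  have hswQ : s(u, w) ∉ Q.edges := by
    intro hmem
    have : s(u, w) = s(u, w') :=
      end_edge (pth_isPath hT x u) hmem (Sym2.mem_mk_left u w) hw'Q (Sym2.mem_mk_left u w')
    rw [Sym2.congr_right] at this
    subst this
    exact hw'P hswP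
  -- OnPath x v s(u,w)
  have hreach : G.Reachable x v := hT.isConnected.preconnected x v
  have hOPxv : OnPath G x v s(u, w) := by
    refine ⟨hreach, fun W => ?_⟩
    have hOPuv : OnPath G u v s(u, w) := (onPath_iff hT).2 hswP
    have := hOPuv.2 ((Q.reverse).append W)
    rw [SimpleGraph.Walk.edges_append, List.mem_append] at this
    rcases this with hmem | hmem
    · rw [SimpleGraph.Walk.edges_reverse, List.mem_reverse] at hmem
      exact absurd hmem hswQ
    · exact hmem
  set R := pth hT x v with hRdef
  have hswR : s(u, w) ∈ R.edges := (onPath_iff hT).1 hOPxv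
  have huR : u ∈ R.support := R.fst_mem_support_of_mem_edges hswR
  have hR1 : R.takeUntil u huR = Q := pth_unique hT ((pth_isPath hT x v).takeUntil huR)
  have hR2 : R.dropUntil u huR = P := pth_unique hT ((pth_isPath hT x v).dropUntil huR)
  have hRspec := R.take_spec huR
  have hRedges : R.edges = Q.edges ++ P.edges := by
    conv_lhs => rw [← hRspec]
    rw [SimpleGraph.Walk.edges_append, hR1, hR2]
  have hRlen : R.length = Q.length + P.length := by
    conv_lhs => rw [← hRspec]
    rw [SimpleGraph.Walk.length_append, hR1, hR2]
  -- weights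
  have hgmem : (x, u, s) ∈ F.erase (u, v, t) := Finset.mem_erase.2 ⟨hgl, hg⟩
  have hsum : s + t ≤ p := by
    have h1 := Finset.add_sum_erase F (fun l => l.2.2) hl
    have h2 := Finset.add_sum_erase (F.erase (u, v, t)) (fun l => l.2.2) hgmem
    have h3 := hF.2.1
    beta_reduce at h1 h2
    simp only at h1 h2
    omega
  refine ⟨insert (x, v, s + t) ((F.erase (u, v, t)).erase (x, u, s)), ⟨?_, ?_, ?_⟩, ?_, ?_⟩
  · intro l hlm
    rcases Finset.mem_insert.1 hlm with rfl | hlm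
    · exact ⟨hxv, by show 1 ≤ s + t; omega, by show s + t ≤ p; exact hsum⟩
    · exact hF.1 _ (F.erase_subset _ ((F.erase (u, v, t)).erase_subset _ hlm))
  · exact le_trans (sum_ie2_le hl hgmem _ (by simp)) hF.2.1
  · rw [← hF.2.2]
    ext e
    simp only [Set.mem_setOf_eq]
    constructor
    · rintro ⟨l, hlm, hOP⟩
      rcases Finset.mem_insert.1 hlm with rfl | hlm
      · -- e on R
        have he : e ∈ R.edges := (onPath_iff hT).1 hOP
        rw [hRedges, List.mem_append] at he
        rcases he with he | he
        · exact ⟨(x, u, s), hg, (onPath_iff hT).2 he⟩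
        · exact ⟨(u, v, t), hl, (onPath_iff hT).2 he⟩
      · exact ⟨l, F.erase_subset _ ((F.erase (u, v, t)).erase_subset _ hlm), hOP⟩
    · rintro ⟨l, hlm, hOP⟩
      by_cases h1 : l = (u, v, t)
      · subst h1
        refine ⟨(x, v, s + t), Finset.mem_insert_self _ _, (onPath_iff hT).2 ?_⟩
        rw [hRedges, List.mem_append]
        exact Or.inr ((onPath_iff hT).1 hOP)
      · by_cases h2 : l = (x, u, s)
        · subst h2
          refine ⟨(x, v, s + t), Finset.mem_insert_self _ _, (onPath_iff hT).2 ?_⟩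
          rw [hRedges, List.mem_append]
          exact Or.inl ((onPath_iff hT).1 hOP)
        · exact ⟨l, Finset.mem_insert_of_mem
            (Finset.mem_erase.2 ⟨h2, Finset.mem_erase.2 ⟨h1, hlm⟩⟩), hOP⟩
  · refine sum_ie2_le hl hgmem _ ?_
    simp only
    exact hmetric.2 x u v s t (s + t) hxu huv hxv hs1 ht1 hsum le_rfl
  · refine sum_ie2_lt hl hgmem _ ?_
    simp only
    rw [← hPdef, ← hQdef, ← hRdef, hRlen]
    omega

end Main2

section Main3
variable {V : Type*} [Fintype V] {G : SimpleGraph V} [DecidableRel G.Adj]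
  (hT : G.IsTree) {p : ℕ} {c : V → V → ℕ → ℝ≥0∞}

lemma improve_main (hsymm : ∀ u v t, c u v t = c v u t)
    (hmetric : IsMetricInstance G p c) {F : Finset (V × V × ℕ)}
    (hF : Feasible G p F) {u v : V} {t : ℕ}
    (hl : (u, v, t) ∈ F) (hdeg : G.degree u = 2) :
    ∃ F', Feasible G p F' ∧ linkCost c F' ≤ linkCost c F ∧ mea hT F' < mea hT F := by
  have huv : u ≠ v := (hF.1 _ hl).1
  have ht1 : 1 ≤ t := (hF.1 _ hl).2.1
  have htp : t ≤ p := (hF.1 _ hl).2.2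
  set P := pth hT u v with hPdef
  obtain ⟨w, hadj, tl, hPeq⟩ := path_cons P huv
  have hPp : tl.IsPath ∧ u ∉ tl.support := by
    have := pth_isPath hT u v
    rw [← hPdef, hPeq, SimpleGraph.Walk.cons_isPath_iff] at this
    exact this
  obtain ⟨w', hadj', hw'w, hnbr⟩ := deg_two_setup hdeg hadj
  have he'P : s(u, w') ∉ P.edges := by
    rw [hPeq, SimpleGraph.Walk.edges_cons]
    intro h
    rcases List.mem_cons.1 h with h | h
    · exact hw'w (Sym2.congr_right.1 h)
    · exact hPp.2 (tl.fst_mem_support_of_mem_edges h)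
  have he'E : s(u, w') ∈ G.edgeSet := hadj'
  obtain ⟨g, hgF, hOPg⟩ : ∃ l ∈ F, OnPath G l.1 l.2.1 s(u, w') := by
    have := hF.2.2
    rw [Set.ext_iff] at this
    exact (this _).2 he'E
  obtain ⟨x, y, s⟩ := g
  simp only at hOPg
  have hgl : (x, y, s) ≠ (u, v, t) := by
    intro h
    rw [show x = u from congrArg (·.1) h, show y = v from congrArg (·.2.1) h] at hOPg
    exact he'P ((onPath_iff hT).1 hOPg)
  have he'Q : s(u, w') ∈ (pth hT x y).edges := (onPath_iff hT).1 hOPg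
  by_cases hux : u = x
  · subst hux
    have huy : u ≠ y := (hF.1 _ hgF).1
    obtain ⟨hF2, hc2, hm2⟩ := swap_lemma hT hsymm hF hgF
    have hl2 : (u, v, t) ∈ insert (y, u, s) (F.erase (u, y, s)) :=
      Finset.mem_insert_of_mem (Finset.mem_erase.2 ⟨fun h => hgl h.symm, hl⟩)
    have hg2 : (y, u, s) ∈ insert (y, u, s) (F.erase (u, y, s)) := Finset.mem_insert_self _ _
    have hgl2 : (y, u, s) ≠ (u, v, t) := by
      intro h
      exact huy (congrArg (·.1) h).symm
    have hw'Q2 : s(u, w') ∈ (pth hT y u).edges := by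
      rw [← pth_reverse hT u y, SimpleGraph.Walk.edges_reverse, List.mem_reverse]
      exact he'Q
    obtain ⟨F', hF', hc', hm'⟩ := merge_lemma hT hmetric hF2 hl2 hg2 hgl2 hw'Q2 he'P
    exact ⟨F', hF', le_trans hc' hc2, lt_of_lt_of_le hm' hm2⟩
  by_cases huy : u = y
  · subst huy
    exact merge_lemma hT hmetric hF hl hgF hgl he'Q he'P
  · -- u is an internal vertex of the path of g
    set Q := pth hT x y with hQdef
    have hu : u ∈ Q.support := Q.fst_mem_support_of_mem_edges he'Q
    have hQ1p : (Q.takeUntil u hu).IsPath := (pth_isPath hT x y).takeUntil hu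
    have hQ2p : (Q.dropUntil u hu).IsPath := (pth_isPath hT x y).dropUntil hu
    obtain ⟨z1, hz1, tl1, hQ1eq⟩ := path_cons (Q.takeUntil u hu).reverse hux
    obtain ⟨z2, hz2, tl2, hQ2eq⟩ := path_cons (Q.dropUntil u hu) huy
    have hf1 : s(u, z1) ∈ (Q.takeUntil u hu).edges := by
      rw [← List.mem_reverse, ← SimpleGraph.Walk.edges_reverse, hQ1eq]
      exact List.mem_cons_self
    have hf2 : s(u, z2) ∈ (Q.dropUntil u hu).edges := by
      rw [hQ2eq]; exact List.mem_cons_self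
    have hQedges : Q.edges = (Q.takeUntil u hu).edges ++ (Q.dropUntil u hu).edges := by
      conv_lhs => rw [← Q.take_spec hu]
      rw [SimpleGraph.Walk.edges_append]
    have hnd := (pth_isPath hT x y).isTrail.edges_nodup
    rw [← hQdef, hQedges, List.nodup_append] at hnd
    have hz12 : z1 ≠ z2 := by
      rintro rfl
      exact hnd.2.2 _ hf1 _ hf2 rfl
    have hsw : s(u, w) ∈ Q.edges := by
      rw [hQedges, List.mem_append]
      rcases hnbr z1 hz1 with rfl | rfl
      · exact Or.inl hf1
      · rcases hnbr z2 hz2 with rfl | rfl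
        · exact Or.inr hf2
        · exact absurd rfl hz12
    have hOPsw : OnPath G x y s(u, w) := (onPath_iff hT).2 hsw
    have hgmem : (x, y, s) ∈ F.erase (u, v, t) := Finset.mem_erase.2 ⟨hgl, hgF⟩
    by_cases hwv : w = v
    · -- drop the link (u,v,t) entirely
      subst hwv
      have htlnil : tl = SimpleGraph.Walk.nil := SimpleGraph.Walk.isPath_iff_eq_nil.1 hPp.1
      have hPedges : P.edges = [s(u, w)] := by rw [hPeq, htlnil]; rfl
      refine ⟨F.erase (u, w, t), ⟨?_, ?_, ?_⟩, ?_, ?_⟩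
      · exact fun l hlm => hF.1 _ (F.erase_subset _ hlm)
      · exact le_trans (Finset.sum_le_sum_of_subset (F.erase_subset _)) hF.2.1
      · rw [← hF.2.2]
        ext e
        simp only [Set.mem_setOf_eq]
        constructor
        · rintro ⟨l, hlm, hOP⟩
          exact ⟨l, F.erase_subset _ hlm, hOP⟩
        · rintro ⟨l, hlm, hOP⟩
          by_cases h1 : l = (u, w, t)
          · subst h1
            simp only at hOP
            have : e ∈ P.edges := (onPath_iff hT).1 hOP
            rw [hPedges] at this
            rcases List.mem_singleton.1 this with rfl
            exact ⟨(x, y, s), hgmem, hOPsw⟩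
          · exact ⟨l, Finset.mem_erase.2 ⟨h1, hlm⟩, hOP⟩
      · exact Finset.sum_le_sum_of_subset (F.erase_subset _)
      · have h1 := Finset.add_sum_erase F (fun l => 1 + (pth hT l.1 l.2.1).length) hl
        beta_reduce at h1
        simp only at h1
        show (∑ l ∈ F.erase (u, w, t), (1 + (pth hT l.1 l.2.1).length)) <
          ∑ l ∈ F, (1 + (pth hT l.1 l.2.1).length)
        omega
    · -- shrink the link (u,v,t) to (w,v,t)
      have htlP : pth hT w v = tl := (pth_unique hT hPp.1).symm
      refine ⟨insert (w, v, t) (F.erase (u, v, t)), ⟨?_, ?_, ?_⟩, ?_, ?_⟩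
      · intro l hlm
        rcases Finset.mem_insert.1 hlm with rfl | hlm
        · exact ⟨hwv, ht1, htp⟩
        · exact hF.1 _ (F.erase_subset _ hlm)
      · exact le_trans (sum_ie_le hl _ le_rfl) hF.2.1
      · rw [← hF.2.2]
        ext e
        simp only [Set.mem_setOf_eq]
        constructor
        · rintro ⟨l, hlm, hOP⟩
          rcases Finset.mem_insert.1 hlm with rfl | hlm
          · simp only at hOP
            refine ⟨(u, v, t), hl, ?_⟩
            simp only
            rw [onPath_iff hT] at hOP ⊢
            rw [← hPdef, hPeq, SimpleGraph.Walk.edges_cons]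
            rw [htlP] at hOP
            exact List.mem_cons_of_mem _ hOP
          · exact ⟨l, F.erase_subset _ hlm, hOP⟩
        · rintro ⟨l, hlm, hOP⟩
          by_cases h1 : l = (u, v, t)
          · subst h1
            simp only at hOP
            have he : e ∈ P.edges := (onPath_iff hT).1 hOP
            rw [hPeq, SimpleGraph.Walk.edges_cons] at he
            rcases List.mem_cons.1 he with rfl | he
            · exact ⟨(x, y, s), Finset.mem_insert_of_mem hgmem, hOPsw⟩
            · refine ⟨(w, v, t), Finset.mem_insert_self _ _, ?_⟩
              simp only
              rw [onPath_iff hT, htlP]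
              exact he
          · exact ⟨l, Finset.mem_insert_of_mem (Finset.mem_erase.2 ⟨h1, hlm⟩), hOP⟩
      · refine sum_ie_le hl _ ?_
        show c w v t ≤ c u v t
        refine hmetric.1 (u, v, t) (w, v, t) ⟨huv, ht1, htp⟩ ⟨hwv, ht1, htp⟩
          ⟨le_rfl, fun ed hed => ?_⟩
        simp only at hed ⊢
        rw [onPath_iff hT] at hed ⊢
        rw [htlP] at hed
        rw [← hPdef, hPeq, SimpleGraph.Walk.edges_cons]
        exact List.mem_cons_of_mem _ hed
      · refine sum_ie_lt hl _ ?_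
        show 1 + (pth hT w v).length < 1 + (pth hT u v).length
        rw [htlP, ← hPdef, hPeq, SimpleGraph.Walk.length_cons]
        omega

end Main3

section Main4
variable {V : Type*} [Fintype V] {G : SimpleGraph V} [DecidableRel G.Adj]
  (hT : G.IsTree) {p : ℕ} {c : V → V → ℕ → ℝ≥0∞}

lemma improve (hsymm : ∀ u v t, c u v t = c v u t)
    (hmetric : IsMetricInstance G p c) {F : Finset (V × V × ℕ)}
    (hF : Feasible G p F) {l : V × V × ℕ} (hl : l ∈ F)
    (hdeg : G.degree l.1 = 2 ∨ G.degree l.2.1 = 2) :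
    ∃ F', Feasible G p F' ∧ linkCost c F' ≤ linkCost c F ∧ mea hT F' < mea hT F := by
  obtain ⟨u, v, t⟩ := l
  simp only at hdeg
  rcases hdeg with hdeg | hdeg
  · exact improve_main hT hsymm hmetric hF hl hdeg
  · obtain ⟨hF2, hc2, hm2⟩ := swap_lemma hT hsymm hF hl
    obtain ⟨F', hF', hc', hm'⟩ :=
      improve_main hT hsymm hmetric hF2 (Finset.mem_insert_self (v, u, t) _) hdeg
    exact ⟨F', hF', le_trans hc' hc2, lt_of_lt_of_le hm' hm2⟩

include hT in
lemma degree_pos (hV : 2 ≤ Fintype.card V) (u : V) : 1 ≤ G.degree u := by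
  obtain ⟨v, hvu⟩ := Fintype.exists_ne_of_one_lt_card (by omega) u
  obtain ⟨w, hadj, tl, -⟩ := path_cons (pth hT u v) (Ne.symm hvu)
  exact G.degree_pos_iff_exists_adj u |>.2 ⟨w, hadj⟩

end Main4

theorem exists_optimal_on_corners_tree' {V : Type*} [Fintype V]
    (G : SimpleGraph V) [DecidableRel G.Adj] (hT : G.IsTree)
    (hV : 2 ≤ Fintype.card V) (p : ℕ) (c : V → V → ℕ → ℝ≥0∞)
    (hsymm : ∀ u v t, c u v t = c v u t)
    (hmetric : IsMetricInstance G p c)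
    (hfeas : ∃ F : Finset (V × V × ℕ), Feasible G p F) :
    ∃ F : Finset (V × V × ℕ), Feasible G p F ∧
      (∀ F' : Finset (V × V × ℕ), Feasible G p F' → linkCost c F ≤ linkCost c F') ∧
      ∀ l ∈ F, (G.degree l.1 = 1 ∨ 3 ≤ G.degree l.1) ∧
        (G.degree l.2.1 = 1 ∨ 3 ≤ G.degree l.2.1) := by
  classical
  set L : Finset (V × V × ℕ) := Finset.univ ×ˢ Finset.univ ×ˢ Finset.range (p + 1) with hL
  have hsub : ∀ {F : Finset (V × V × ℕ)}, Feasible G p F → F ⊆ L := by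
    intro F hF l hlF
    obtain ⟨-, hv1, hv2⟩ := hF.1 _ hlF
    rw [hL]
    simp only [Finset.mem_product, Finset.mem_univ, Finset.mem_range, true_and]
    omega
  set S := L.powerset.filter (fun F => Feasible G p F) with hS
  obtain ⟨F₀, hF₀⟩ := hfeas
  have hmemS : ∀ {F : Finset (V × V × ℕ)}, Feasible G p F → F ∈ S := by
    intro F hF
    rw [hS]
    exact Finset.mem_filter.2 ⟨Finset.mem_powerset.2 (hsub hF), hF⟩
  have hSne : S.Nonempty := ⟨F₀, hmemS hF₀⟩
  set m := S.inf' hSne (linkCost c) with hm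
  have hmle : ∀ F', Feasible G p F' → m ≤ linkCost c F' :=
    fun F' h => Finset.inf'_le _ (hmemS h)
  set T := S.filter (fun F => linkCost c F = m) with hTdef
  have hTne : T.Nonempty := by
    obtain ⟨F₁, hF₁S, hF₁⟩ := Finset.exists_mem_eq_inf' hSne (linkCost c)
    exact ⟨F₁, Finset.mem_filter.2 ⟨hF₁S, hF₁.symm⟩⟩
  obtain ⟨F, hFT, hFmin⟩ := Finset.exists_min_image T (mea hT) hTne
  have hFfeas : Feasible G p F := (Finset.mem_filter.1 (Finset.mem_filter.1 hFT).1).2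
  have hFcost : linkCost c F = m := (Finset.mem_filter.1 hFT).2
  refine ⟨F, hFfeas, fun F' h' => hFcost ▸ hmle F' h', ?_⟩
  intro l hlF
  by_contra hbad
  have hd1 : 1 ≤ G.degree l.1 := degree_pos hT hV l.1
  have hd2 : 1 ≤ G.degree l.2.1 := degree_pos hT hV l.2.1
  have hdeg2 : G.degree l.1 = 2 ∨ G.degree l.2.1 = 2 := by
    rcases not_and_or.1 hbad with h | h <;> push_neg at h <;> omega
  obtain ⟨F', hF'f, hc', hm'⟩ := improve hT hsymm hmetric hFfeas hlF hdeg2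
  have hge : m ≤ linkCost c F' := hmle _ hF'f
  have hceq : linkCost c F' = m := le_antisymm (le_trans hc' (le_of_eq hFcost)) hge
  have hF'T : F' ∈ T := Finset.mem_filter.2 ⟨hmemS hF'f, hceq⟩
  exact absurd (hFmin F' hF'T) (not_le.2 hm')

/-- For a metric weighted link instance on a tree that admits a feasible link set,
there is an optimal (minimum-cost feasible) link set all of whose links are incident
only to corner nodes (leaves and nodes of degree at least 3). -/
theorem exists_optimal_on_corners_tree {V : Type*} [Fintype V]
    (G : SimpleGraph V) [DecidableRel G.Adj] (hT : G.IsTree)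
    (hV : 2 ≤ Fintype.card V) (p : ℕ) (c : V → V → ℕ → ℝ≥0∞)
    (hsymm : ∀ u v t, c u v t = c v u t)
    (hmetric : IsMetricInstance G p c)
    (hfeas : ∃ F : Finset (V × V × ℕ), Feasible G p F) :
    ∃ F : Finset (V × V × ℕ), Feasible G p F ∧
      (∀ F' : Finset (V × V × ℕ), Feasible G p F' → linkCost c F ≤ linkCost c F') ∧
      ∀ l ∈ F, (G.degree l.1 = 1 ∨ 3 ≤ G.degree l.1) ∧
        (G.degree l.2.1 = 1 ∨ 3 ≤ G.degree l.2.1) := by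
  exact exists_optimal_on_corners_tree' G hT hV p c hsymm hmetric hfeas
end

section
/- Let G = (V,E) be a 2-edge-connected multigraph in which every 3-inseparable set is a singleton, i.e., for every two distinct nodes x,y there is X ⊆ V with x ∈ X, y ∉ X and d_E(X) ≤ 2. Then G is a cactus: every edge of E belongs to exactly one circuit of G. -/
open scoped Classical

/-- The edge `e` has exactly one endpoint in `X`. -/
def CrossesEdge {V E : Type*} (ends : E → Sym2 V) (X : Finset V) (e : E) : Prop :=
  ∃ u v, ends e = s(u, v) ∧ u ∈ X ∧ v ∉ X

/-- The number of edges with exactly one endpoint in `X`. -/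
noncomputable def cutDeg {V E : Type*} [Fintype E] (ends : E → Sym2 V)
    (X : Finset V) : ℕ :=
  (Finset.univ.filter (CrossesEdge ends X)).card

/-- `C` is a circuit of the multigraph: the edge set of a simple cycle, i.e. there are
`m ≥ 2` distinct edges `e₀, …, e_{m-1}` and `m` distinct nodes `v₀, …, v_{m-1}` with
`e_i` joining `v_i` and `v_{i+1 (mod m)}`, and `C = {e₀, …, e_{m-1}}`. -/
noncomputable def IsCircuit {V E : Type*} (ends : E → Sym2 V) (C : Finset E) : Prop :=
  ∃ (m : ℕ) (hm : 2 ≤ m) (e : Fin m → E) (v : Fin m → V),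
    Function.Injective e ∧ Function.Injective v ∧
    (∀ i : Fin m, ends (e i) = s(v i, v ⟨(i.val + 1) % m, Nat.mod_lt _ (by omega)⟩)) ∧
    C = Finset.image e Finset.univ


namespace Cactus

variable {V E : Type*}

inductive IsWalk (ends : E → Sym2 V) : V → V → List E → List V → Prop
  | nil (a : V) : IsWalk ends a a [] [a]
  | cons {a b c : V} {f : E} {es : List E} {vs : List V}
      (hf : ends f = s(a, b)) (hw : IsWalk ends b c es vs) :
      IsWalk ends a c (f :: es) (a :: vs)

variable {ends : E → Sym2 V}


lemma IsWalk.length_eq {a c : V} {es : List E} {vs : List V}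
    (h : IsWalk ends a c es vs) : vs.length = es.length + 1 := by
  induction h with
  | nil a => simp
  | cons hf hw ih => simp [ih]

lemma IsWalk.snoc {a b c : V} {f : E} {es : List E} {vs : List V}
    (hw : IsWalk ends a b es vs) (hf : ends f = s(b, c)) :
    IsWalk ends a c (es ++ [f]) (vs ++ [c]) := by
  induction hw with
  | nil a => exact IsWalk.cons hf (IsWalk.nil c)
  | cons h hw ih => exact IsWalk.cons h (ih hf)

lemma IsWalk.reverse {a c : V} {es : List E} {vs : List V}
    (hw : IsWalk ends a c es vs) : IsWalk ends c a es.reverse vs.reverse := by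
  induction hw with
  | nil a => simpa using IsWalk.nil a
  | cons h hw ih => simpa using ih.snoc (h.trans (Sym2.eq_swap))

lemma IsWalk.start_mem {a c : V} {es : List E} {vs : List V}
    (hw : IsWalk ends a c es vs) : a ∈ vs := by
  cases hw <;> simp

lemma IsWalk.exists_crossing {X : Finset V} {a c : V} {es : List E} {vs : List V}
    (hw : IsWalk ends a c es vs) (ha : a ∈ X) (hc : c ∉ X) :
    ∃ f ∈ es, CrossesEdge ends X f := by
  revert ha hc
  induction hw with
  | nil a => intro ha hc; exact absurd ha hc
  | @cons a b c f es vs hf hw ih =>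
    intro ha hc
    by_cases hb : b ∈ X
    · obtain ⟨g, hg, hcr⟩ := ih hb hc
      exact ⟨g, List.mem_cons_of_mem _ hg, hcr⟩
    · exact ⟨f, List.mem_cons_self, ⟨a, b, hf, ha, hb⟩⟩

lemma IsWalk.mem_of_edge {a c x y : V} {f : E} {es : List E} {vs : List V}
    (hw : IsWalk ends a c es vs) (hf : f ∈ es) (hxy : ends f = s(x, y)) :
    x ∈ vs ∧ y ∈ vs := by
  induction hw with
  | nil a => simp at hf
  | @cons a b c g es vs hg hw ih =>
    rcases List.mem_cons.mp hf with rfl | hf'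
    · rw [hg] at hxy
      have hb : b ∈ vs := hw.start_mem
      rcases Sym2.eq_iff.mp hxy.symm with ⟨rfl, rfl⟩ | ⟨rfl, rfl⟩
      · exact ⟨List.mem_cons_self, List.mem_cons_of_mem _ hb⟩
      · exact ⟨List.mem_cons_of_mem _ hb, List.mem_cons_self⟩
    · obtain ⟨h1, h2⟩ := ih hf'
      exact ⟨List.mem_cons_of_mem _ h1, List.mem_cons_of_mem _ h2⟩

lemma IsWalk.nodup_edges {a c : V} {es : List E} {vs : List V}
    (hw : IsWalk ends a c es vs) (hv : vs.Nodup) : es.Nodup := by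
  induction hw with
  | nil a => simp
  | @cons a b c f es vs hf hw ih =>
    rw [List.nodup_cons] at hv ⊢
    refine ⟨fun hmem => ?_, ih hv.2⟩
    exact hv.1 (hw.mem_of_edge hmem hf).1

lemma IsWalk.suffix_from {b c a : V} {es : List E} {vs : List V}
    (hw : IsWalk ends b c es vs) (ha : a ∈ vs) :
    ∃ es' vs', IsWalk ends a c es' vs' ∧ es' <:+ es ∧ vs' <:+ vs := by
  induction hw with
  | nil b =>
    rcases List.mem_singleton.mp ha with rfl
    exact ⟨[], [a], IsWalk.nil a, List.suffix_refl _, List.suffix_refl _⟩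
  | @cons b b' c f es vs hf hw ih =>
    rcases List.mem_cons.mp ha with rfl | ha'
    · exact ⟨f :: es, a :: vs, IsWalk.cons hf hw, List.suffix_refl _, List.suffix_refl _⟩
    · obtain ⟨es', vs', hw', hse, hsv⟩ := ih ha'
      exact ⟨es', vs', hw', hse.trans (List.suffix_cons _ _), hsv.trans (List.suffix_cons _ _)⟩

lemma IsWalk.deloop {a c : V} {es : List E} {vs : List V}
    (hw : IsWalk ends a c es vs) :
    ∃ es' vs', IsWalk ends a c es' vs' ∧ vs'.Nodup ∧ ∀ f ∈ es', f ∈ es := by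
  induction hw with
  | nil a => exact ⟨[], [a], IsWalk.nil a, by simp, by simp⟩
  | @cons a b c f es vs hf hw ih =>
    obtain ⟨es', vs', hw', hnd, hsub⟩ := ih
    by_cases hav : a ∈ vs'
    · obtain ⟨es2, vs2, hw2, hse, hsv⟩ := hw'.suffix_from hav
      exact ⟨es2, vs2, hw2, hnd.sublist hsv.sublist,
        fun g hg => List.mem_cons_of_mem _ (hsub g (hse.subset hg))⟩
    · exact ⟨f :: es', a :: vs', IsWalk.cons hf hw', List.nodup_cons.mpr ⟨hav, hnd⟩,
        fun g hg => by rcases List.mem_cons.mp hg with rfl | hg'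
                       · exact List.mem_cons_self
                       · exact List.mem_cons_of_mem _ (hsub g hg')⟩

lemma IsWalk.get_zero {a c : V} {es : List E} {vs : List V}
    (hw : IsWalk ends a c es vs) (h0 : 0 < vs.length) : vs.get ⟨0, h0⟩ = a := by
  cases hw <;> rfl

lemma IsWalk.getLast_eq {a c : V} {es : List E} {vs : List V}
    (hw : IsWalk ends a c es vs) (h : vs ≠ []) : vs.getLast h = c := by
  induction hw with
  | nil a => rfl
  | @cons a b c f es vs hf hw ih =>
    have hvs : vs ≠ [] := by
      intro hnil; cases hw <;> simp_all
    rw [List.getLast_cons hvs]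
    exact ih hvs

lemma IsWalk.get_rel {a c : V} {es : List E} {vs : List V}
    (hw : IsWalk ends a c es vs) :
    ∀ (i : ℕ) (hi : i < es.length) (h1 : i < vs.length) (h2 : i + 1 < vs.length),
      ends (es.get ⟨i, hi⟩) = s(vs.get ⟨i, h1⟩, vs.get ⟨i + 1, h2⟩) := by
  induction hw with
  | nil a => intro i hi; simp at hi
  | @cons a b c f es vs hf hw ih =>
    intro i hi h1 h2
    cases i with
    | zero =>
      have hb : vs.get ⟨0, by rw [hw.length_eq]; omega⟩ = b := hw.get_zero _
      show ends f = s(a, vs.get ⟨0, _⟩)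
      rw [hb]; exact hf
    | succ k =>
      exact ih k (by simpa using hi) (by simpa using h1) (by simpa using h2)







/-- Build a circuit from a nodup walk `u → v` plus a closing edge `e`. -/
lemma circuit_of_walk {u v : V} {e : E} {es : List E} {vs : List V}
    (hw : IsWalk ends u v es vs) (hnd : vs.Nodup) (huv : u ≠ v)
    (he : ends e = s(v, u)) (heES : e ∉ es) :
    ∃ C : Finset E, IsCircuit ends C ∧ e ∈ C := by
  have hlen : vs.length = es.length + 1 := hw.length_eq
  have hespos : 0 < es.length := by
    rcases es with _ | ⟨f, es'⟩
    · cases hw; exact absurd rfl huv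
    · simp
  set n := es.length with hn
  set m := n + 1 with hmdef
  have hm : 2 ≤ m := by omega
  have hvlen : vs.length = m := by omega
  set efun : Fin m → E := fun i => if h : i.val < n then es.get ⟨i.val, h⟩ else e with hef
  set vfun : Fin m → V := fun i => vs.get ⟨i.val, by rw [hvlen] at *; exact i.isLt⟩ with hvf
  have hndes : es.Nodup := hw.nodup_edges hnd
  have heinj : Function.Injective efun := by
    intro i j hij
    simp only [hef] at hij
    by_cases hi : i.val < n <;> by_cases hj : j.val < n
    · rw [dif_pos hi, dif_pos hj] at hij
      have := (List.Nodup.get_inj_iff hndes).mp hij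
      exact Fin.ext (by simpa using congrArg Fin.val this)
    · rw [dif_pos hi, dif_neg hj] at hij
      exact absurd (hij ▸ List.get_mem es _) heES
    · rw [dif_neg hi, dif_pos hj] at hij
      exact absurd (hij.symm ▸ List.get_mem es _) heES
    · exact Fin.ext (by omega)
  have hvinj : Function.Injective vfun := by
    intro i j hij
    simp only [hvf] at hij
    have := (List.Nodup.get_inj_iff hnd).mp hij
    exact Fin.ext (by simpa using congrArg Fin.val this)
  have hrel : ∀ i : Fin m, ends (efun i) = s(vfun i, vfun ⟨(i.val + 1) % m, Nat.mod_lt _ (by omega)⟩) := by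
    intro i
    by_cases hi : i.val < n
    · have hmod : (i.val + 1) % m = i.val + 1 := Nat.mod_eq_of_lt (by omega)
      have h2 : i.val + 1 < vs.length := by omega
      have hfin : (⟨(i.val + 1) % m, Nat.mod_lt _ (by omega)⟩ : Fin m) = ⟨i.val + 1, by omega⟩ :=
        Fin.ext hmod
      simp only [hef, hvf, dif_pos hi, hfin]
      exact hw.get_rel i.val hi (by omega) h2
    · have hiv : i.val = n := by omega
      have hmod : (i.val + 1) % m = 0 := by rw [hiv]; simp [hmdef]
      have hu : vs.get ⟨0, by omega⟩ = u := hw.get_zero _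
      have hne : vs ≠ [] := by
        intro h
        rw [h] at hlen
        simp at hlen
      have hv2 : vs.get ⟨i.val, by omega⟩ = v := by
        have hgl := hw.getLast_eq hne
        replace hgl : vs.get ⟨vs.length - 1, by omega⟩ = v := (List.getLast_eq_getElem ..).symm.trans hgl
        have hfin : (⟨vs.length - 1, by omega⟩ : Fin vs.length) = ⟨i.val, by omega⟩ :=
          Fin.ext (by simp; omega)
        rw [hfin] at hgl
        exact hgl
      have hfin0 : (⟨(i.val + 1) % m, Nat.mod_lt _ (by omega)⟩ : Fin m) = ⟨0, by omega⟩ :=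
        Fin.ext hmod
      simp only [hef, hvf, dif_neg hi, hfin0]
      rw [he]
      exact congrArg₂ (fun x y => s(x, y)) hv2.symm hu.symm
  refine ⟨Finset.image efun Finset.univ, ⟨m, hm, efun, vfun, heinj, hvinj, hrel, rfl⟩, ?_⟩
  refine Finset.mem_image.mpr ⟨⟨n, by omega⟩, Finset.mem_univ _, ?_⟩
  simp [hef]

/-- Walk along a circuit: from index `i`, `k` steps. -/
lemma circuit_walk {m : ℕ} (hm : 0 < m) (e : Fin m → E) (v : Fin m → V)
    (hrel : ∀ i : Fin m, ends (e i) = s(v i, v ⟨(i.val + 1) % m, Nat.mod_lt _ hm⟩)) :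
    ∀ (k i : ℕ), ∃ vs, IsWalk ends (v ⟨i % m, Nat.mod_lt _ hm⟩) (v ⟨(i + k) % m, Nat.mod_lt _ hm⟩)
      ((List.range k).map fun s => e ⟨(i + s) % m, Nat.mod_lt _ hm⟩) vs := by
  intro k
  induction k with
  | zero => intro i; exact ⟨_, by simpa using IsWalk.nil (v ⟨i % m, Nat.mod_lt _ hm⟩)⟩
  | succ k ih =>
    intro i
    obtain ⟨vs, hvs⟩ := ih (i + 1)
    have hstep : ends (e ⟨i % m, Nat.mod_lt _ hm⟩) =
        s(v ⟨i % m, Nat.mod_lt _ hm⟩, v ⟨(i + 1) % m, Nat.mod_lt _ hm⟩) := by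
      have h1 := hrel ⟨i % m, Nat.mod_lt _ hm⟩
      rw [h1]
      exact congrArg₂ (fun x y => s(x, y)) rfl
        (congrArg v (Fin.ext (by simpa using Nat.mod_add_mod i m 1)))
    have hfun : ((fun s => e ⟨(i + s) % m, Nat.mod_lt _ hm⟩) ∘ Nat.succ) =
        (fun s => e ⟨(i + 1 + s) % m, Nat.mod_lt _ hm⟩) := by
      funext s
      show e ⟨(i + Nat.succ s) % m, _⟩ = _
      exact congrArg e (Fin.ext (congrArg (· % m) (by omega : i + Nat.succ s = i + 1 + s)))
    have hlist : ((List.range (k + 1)).map fun s => e ⟨(i + s) % m, Nat.mod_lt _ hm⟩) =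
        e ⟨i % m, Nat.mod_lt _ hm⟩ ::
          ((List.range k).map fun s => e ⟨(i + 1 + s) % m, Nat.mod_lt _ hm⟩) := by
      rw [List.range_succ_eq_map, List.map_cons, List.map_map, hfun]
      simp
    rw [hlist]
    refine ⟨v ⟨i % m, Nat.mod_lt _ hm⟩ :: vs, IsWalk.cons hstep ?_⟩
    rw [show i + (k + 1) = i + 1 + k from by omega]
    exact hvs


/-- Existence: every edge lies in some circuit. -/
lemma exists_circuit [Fintype V] [Fintype E] {ends : E → Sym2 V}
    (hloopless : ∀ e : E, ¬ (ends e).IsDiag)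
    (h2ec : ∀ X : Finset V, X ≠ ∅ → X ≠ Finset.univ → 2 ≤ cutDeg ends X)
    (e : E) : ∃ C : Finset E, IsCircuit ends C ∧ e ∈ C := by
  obtain ⟨u, w, he⟩ : ∃ u w, ends e = s(u, w) := Sym2.exists.mp ⟨ends e, rfl⟩
  have hne : u ≠ w := by
    intro h
    exact hloopless e (by rw [he, h]; exact Sym2.mk_isDiag_iff.mpr rfl)
  set step : V → V → Prop := fun a b => ∃ f, f ≠ e ∧ ends f = s(a, b) with hstep
  have hR : Relation.ReflTransGen step w u := by
    by_contra hnR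
    set X : Finset V := Finset.univ.filter (fun z => Relation.ReflTransGen step w z) with hX
    have hwX : w ∈ X := Finset.mem_filter.mpr ⟨Finset.mem_univ _, Relation.ReflTransGen.refl⟩
    have huX : u ∉ X := fun h => hnR (Finset.mem_filter.mp h).2
    have h2 : 2 ≤ cutDeg ends X :=
      h2ec X (Finset.ne_empty_of_mem hwX) (fun h => huX (h ▸ Finset.mem_univ u))
    have hsub : Finset.univ.filter (CrossesEdge ends X) ⊆ {e} := by
      intro g hg
      obtain ⟨a, b, hab, haX, hbX⟩ := (Finset.mem_filter.mp hg).2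
      rw [Finset.mem_singleton]
      by_contra hge
      exact hbX (Finset.mem_filter.mpr ⟨Finset.mem_univ _,
        ((Finset.mem_filter.mp haX).2).tail ⟨g, hge, hab⟩⟩)
    have := Finset.card_le_card hsub
    rw [Finset.card_singleton] at this
    have : cutDeg ends X ≤ 1 := this
    omega
  have hwalk : ∃ es vs, IsWalk ends w u es vs ∧ ∀ f ∈ es, f ≠ e := by
    clear he hne
    induction hR using Relation.ReflTransGen.head_induction_on with
    | refl => exact ⟨[], [u], IsWalk.nil u, by simp⟩
    | head h' _ ih =>
      obtain ⟨g, hge, hab⟩ := h'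
      obtain ⟨es, vs, hw, hes⟩ := ih
      exact ⟨g :: es, _ :: vs, IsWalk.cons hab hw, by
        intro f hf
        rcases List.mem_cons.mp hf with rfl | hf'
        · exact hge
        · exact hes f hf'⟩
  obtain ⟨es, vs, hw, hes⟩ := hwalk
  obtain ⟨es', vs', hw', hnd, hsub'⟩ := hw.deloop
  exact circuit_of_walk hw' hnd (Ne.symm hne) he (fun hmem => (hes _ (hsub' _ hmem)) rfl)

lemma mod_shift {m : ℕ} (hm : 0 < m) (p j : ℕ) (hp : p < m) (hj : j < m) :
    (p + (j + m - p) % m) % m = j := by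
  rcases le_or_gt p j with h | h
  · rw [show j + m - p = (j - p) + m from by omega, Nat.add_mod_right,
      Nat.mod_eq_of_lt (by omega : j - p < m), show p + (j - p) = j from by omega]
    exact Nat.mod_eq_of_lt hj
  · rw [Nat.mod_eq_of_lt (by omega : j + m - p < m),
      show p + (j + m - p) = j + m from by omega, Nat.add_mod_right]
    exact Nat.mod_eq_of_lt hj

lemma mod_cancel {m : ℕ} {a b c : ℕ} (hb : b < m) (hc : c < m)
    (h : (a + b) % m = (a + c) % m) : b = c := by
  have h2 : b % m = c % m := Nat.ModEq.add_left_cancel' a h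
  rwa [Nat.mod_eq_of_lt hb, Nat.mod_eq_of_lt hc] at h2

/-- Uniqueness core: there is no edge `f` in `L` but not in `K` when `K, L` are circuits
sharing the edge `e`. -/
lemma no_two [Fintype E] {ends : E → Sym2 V}
    (hsep : ∀ x y : V, x ≠ y → ∃ X : Finset V, x ∈ X ∧ y ∉ X ∧ cutDeg ends X ≤ 2)
    {K L : Finset E} {e f : E}
    (hK : IsCircuit ends K) (hL : IsCircuit ends L)
    (heK : e ∈ K) (heL : e ∈ L) (hfL : f ∈ L) (hfK : f ∉ K) : False := by
  classical
  obtain ⟨mk, hmk, eK, vK, einjK, vinjK, relK, hKeq⟩ := hK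
  obtain ⟨ml, hml, eL, vL, einjL, vinjL, relL, hLeq⟩ := hL
  have hmk0 : 0 < mk := by omega
  have hml0 : 0 < ml := by omega
  set S : Finset V := Finset.image vK Finset.univ with hS
  -- endpoints of K-edges are in S
  have hKend : ∀ h ∈ K, ∀ x y : V, ends h = s(x, y) → x ∈ S ∧ y ∈ S := by
    intro h hh x y hxy
    rw [hKeq] at hh
    obtain ⟨c, -, rfl⟩ := Finset.mem_image.mp hh
    have hc := relK c
    rcases Sym2.eq_iff.mp (hc.symm.trans hxy) with ⟨h1, h2⟩ | ⟨h1, h2⟩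
    · exact ⟨h1 ▸ Finset.mem_image_of_mem vK (Finset.mem_univ _),
        h2 ▸ Finset.mem_image_of_mem vK (Finset.mem_univ _)⟩
    · exact ⟨h2 ▸ Finset.mem_image_of_mem vK (Finset.mem_univ _),
        h1 ▸ Finset.mem_image_of_mem vK (Finset.mem_univ _)⟩
  obtain ⟨i0, -, hi0⟩ := Finset.mem_image.mp (hLeq ▸ heL)
  obtain ⟨j0, -, hj0⟩ := Finset.mem_image.mp (hLeq ▸ hfL)
  set g : ℕ → V := fun t => vL ⟨(i0.val + 1 + t) % ml, Nat.mod_lt _ hml0⟩ with hg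
  have hends_e : ends e = s(vL i0, g 0) := by
    rw [← hi0, relL i0]
  have hvLi0S : vL i0 ∈ S := (hKend e heK _ _ hends_e).1
  have hg0S : g 0 ∈ S := (hKend e heK _ _ hends_e).2
  have hmod_last : (i0.val + 1 + (ml - 1)) % ml = i0.val := by
    rw [show i0.val + 1 + (ml - 1) = i0.val + ml from by omega, Nat.add_mod_right]
    exact Nat.mod_eq_of_lt i0.isLt
  have hglast : g (ml - 1) = vL i0 := congrArg vL (Fin.ext hmod_last)
  set tf : ℕ := (j0.val + ml - (i0.val + 1) % ml) % ml with htfdef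
  have hPlt : (i0.val + 1) % ml < ml := Nat.mod_lt _ hml0
  have htflt : tf < ml := Nat.mod_lt _ hml0
  have htf1 : (i0.val + 1 + tf) % ml = j0.val := by
    rw [← Nat.mod_add_mod]
    exact mod_shift hml0 _ _ hPlt j0.isLt
  have htfne : tf ≠ ml - 1 := by
    intro h
    have hji : j0.val = i0.val := by rw [← htf1, h]; exact hmod_last
    have hfe : f = e := by
      calc f = eL j0 := hj0.symm
        _ = eL i0 := congrArg eL (Fin.ext hji)
        _ = e := hi0
    exact hfK (hfe ▸ heK)
  have htflt1 : tf < ml - 1 := by omega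
  set T' := (Finset.Icc (tf + 1) (ml - 1)).filter (fun s => g s ∈ S) with hT'
  have hT'ne : T'.Nonempty :=
    ⟨ml - 1, Finset.mem_filter.mpr ⟨Finset.mem_Icc.mpr ⟨by omega, le_refl _⟩,
      by rw [hglast]; exact hvLi0S⟩⟩
  set t' := T'.min' hT'ne with ht'def
  have ht'mem := T'.min'_mem hT'ne
  have hgt'S : g t' ∈ S := (Finset.mem_filter.mp ht'mem).2
  have ht'lb : tf + 1 ≤ t' := (Finset.mem_Icc.mp (Finset.mem_filter.mp ht'mem).1).1
  have ht'ub : t' ≤ ml - 1 := (Finset.mem_Icc.mp (Finset.mem_filter.mp ht'mem).1).2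
  set T := (Finset.Icc 0 tf).filter (fun s => g s ∈ S) with hT
  have hTne : T.Nonempty :=
    ⟨0, Finset.mem_filter.mpr ⟨Finset.mem_Icc.mpr ⟨Nat.zero_le _, Nat.zero_le _⟩, hg0S⟩⟩
  set t := T.max' hTne with htdef
  have htmem := T.max'_mem hTne
  have hgtS : g t ∈ S := (Finset.mem_filter.mp htmem).2
  have htub : t ≤ tf := (Finset.mem_Icc.mp (Finset.mem_filter.mp htmem).1).2
  have hinterior : ∀ s, t < s → s < t' → g s ∉ S := by
    intro s hs1 hs2 hgs
    by_cases hstf : s ≤ tf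
    · have hsT : s ∈ T := Finset.mem_filter.mpr ⟨Finset.mem_Icc.mpr ⟨Nat.zero_le _, hstf⟩, hgs⟩
      have := T.le_max' s hsT
      omega
    · have hsT' : s ∈ T' := Finset.mem_filter.mpr ⟨Finset.mem_Icc.mpr ⟨by omega, by omega⟩, hgs⟩
      have := T'.min'_le s hsT'
      omega
  have htt' : t < t' := by omega
  have hxy : g t ≠ g t' := by
    intro h
    have h2 : (i0.val + 1 + t) % ml = (i0.val + 1 + t') % ml := congrArg Fin.val (vinjL h)
    have := mod_cancel (show t < ml from by omega) (show t' < ml from by omega) h2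
    omega
  obtain ⟨Qvs, hQw⟩ := circuit_walk hml0 eL vL relL (t' - t) (i0.val + 1 + t)
  have hQend : vL ⟨(i0.val + 1 + t + (t' - t)) % ml, Nat.mod_lt _ hml0⟩ = g t' :=
    congrArg vL (Fin.ext (congrArg (· % ml) (by omega)))
  have hQnotK : ∀ q ∈ (List.range (t' - t)).map
      (fun s => eL ⟨(i0.val + 1 + t + s) % ml, Nat.mod_lt _ hml0⟩), q ∉ K := by
    intro q hq hqK
    obtain ⟨s, hsr, rfl⟩ := List.mem_map.mp hq
    have hs : s < t' - t := List.mem_range.mp hsr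
    by_cases hrtf : t + s = tf
    · have hidx : (i0.val + 1 + t + s) % ml = j0.val := by
        rw [show i0.val + 1 + t + s = i0.val + 1 + tf from by omega]
        exact htf1
      have hqf : eL ⟨(i0.val + 1 + t + s) % ml, Nat.mod_lt _ hml0⟩ = f := by
        rw [← hj0]
        exact congrArg eL (Fin.ext hidx)
      rw [hqf] at hqK
      exact hfK hqK
    · have hrel2 := relL ⟨(i0.val + 1 + t + s) % ml, Nat.mod_lt _ hml0⟩
      have hq2 : ends (eL ⟨(i0.val + 1 + t + s) % ml, Nat.mod_lt _ hml0⟩)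
          = s(g (t + s), g (t + s + 1)) := by
        rw [hrel2]
        exact congrArg₂ (fun x y => s(x, y))
          (congrArg vL (Fin.ext (congrArg (· % ml) (by omega))))
          (congrArg vL (Fin.ext (by
            show ((i0.val + 1 + t + s) % ml + 1) % ml = (i0.val + 1 + (t + s + 1)) % ml
            rw [Nat.mod_add_mod]
            exact congrArg (· % ml) (by omega))))
      obtain ⟨hm1, hm2⟩ := hKend _ hqK _ _ hq2
      rcases Nat.eq_zero_or_pos s with rfl | hspos
      · by_cases hs1 : t + 0 + 1 < t'
        · exact hinterior (t + 0 + 1) (by omega) hs1 hm2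
        · exact hrtf (by omega)
      · exact hinterior (t + s) (by omega) (by omega) hm1
  obtain ⟨α, -, hα⟩ := Finset.mem_image.mp hgtS
  obtain ⟨β, -, hβ⟩ := Finset.mem_image.mp hgt'S
  have hab' : α ≠ β := by intro h; exact hxy (by rw [← hα, ← hβ, h])
  have habv : α.val ≠ β.val := fun h => hab' (Fin.ext h)
  have hαlt := α.isLt
  have hβlt := β.isLt
  set d1 := (β.val + mk - α.val) % mk with hd1def
  have hd1lt : d1 < mk := Nat.mod_lt _ hmk0
  have hd1pos : 0 < d1 := by
    rcases le_or_gt α.val β.val with h | h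
    · rw [hd1def, show β.val + mk - α.val = (β.val - α.val) + mk from by omega,
        Nat.add_mod_right, Nat.mod_eq_of_lt (show β.val - α.val < mk from by omega)]
      omega
    · rw [hd1def, Nat.mod_eq_of_lt (show β.val + mk - α.val < mk from by omega)]
      omega
  have hab2 : (α.val + d1) % mk = β.val := by
    rw [hd1def]; exact mod_shift hmk0 _ _ α.isLt β.isLt
  set d2 := mk - d1 with hd2def
  have hd2pos : 0 < d2 := by omega
  have hba2 : (β.val + d2) % mk = α.val := by
    calc (β.val + d2) % mk = ((α.val + d1) % mk + d2) % mk := by rw [hab2]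
      _ = (α.val + d1 + d2) % mk := Nat.mod_add_mod _ _ _
      _ = (α.val + mk) % mk := by rw [show α.val + d1 + d2 = α.val + mk from by omega]
      _ = α.val := by rw [Nat.add_mod_right]; exact Nat.mod_eq_of_lt α.isLt
  obtain ⟨vs1, hW1⟩ := circuit_walk hmk0 eK vK relK d1 α.val
  obtain ⟨vs2, hW2⟩ := circuit_walk hmk0 eK vK relK d2 β.val
  have hW2r := hW2.reverse
  obtain ⟨X, hxX, hyX, hcut⟩ := hsep (g t) (g t') hxy
  have hstart1 : vK ⟨α.val % mk, Nat.mod_lt _ hmk0⟩ ∈ X := by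
    rw [show (⟨α.val % mk, Nat.mod_lt _ hmk0⟩ : Fin mk) = α
      from Fin.ext (Nat.mod_eq_of_lt α.isLt), hα]
    exact hxX
  have hend1 : vK ⟨(α.val + d1) % mk, Nat.mod_lt _ hmk0⟩ ∉ X := by
    rw [show (⟨(α.val + d1) % mk, Nat.mod_lt _ hmk0⟩ : Fin mk) = β from Fin.ext hab2, hβ]
    exact hyX
  obtain ⟨f1, hf1mem, hf1cr⟩ := hW1.exists_crossing hstart1 hend1
  have hstart2 : vK ⟨(β.val + d2) % mk, Nat.mod_lt _ hmk0⟩ ∈ X := by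
    rw [show (⟨(β.val + d2) % mk, Nat.mod_lt _ hmk0⟩ : Fin mk) = α from Fin.ext hba2, hα]
    exact hxX
  have hend2 : vK ⟨β.val % mk, Nat.mod_lt _ hmk0⟩ ∉ X := by
    rw [show (⟨β.val % mk, Nat.mod_lt _ hmk0⟩ : Fin mk) = β
      from Fin.ext (Nat.mod_eq_of_lt β.isLt), hβ]
    exact hyX
  obtain ⟨f2, hf2mem', hf2cr⟩ := hW2r.exists_crossing hstart2 hend2
  have hf2mem := List.mem_reverse.mp hf2mem'
  have hQstart : vL ⟨(i0.val + 1 + t) % ml, Nat.mod_lt _ hml0⟩ ∈ X := hxX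
  have hQend2 : vL ⟨(i0.val + 1 + t + (t' - t)) % ml, Nat.mod_lt _ hml0⟩ ∉ X := by
    rw [hQend]; exact hyX
  obtain ⟨f3, hf3mem, hf3cr⟩ := hQw.exists_crossing hQstart hQend2
  obtain ⟨s1, hs1r, rfl⟩ := List.mem_map.mp hf1mem
  obtain ⟨s2, hs2r, rfl⟩ := List.mem_map.mp hf2mem
  have hs1 : s1 < d1 := List.mem_range.mp hs1r
  have hs2 : s2 < d2 := List.mem_range.mp hs2r
  have hne12 : eK ⟨(α.val + s1) % mk, Nat.mod_lt _ hmk0⟩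
      ≠ eK ⟨(β.val + s2) % mk, Nat.mod_lt _ hmk0⟩ := by
    intro h
    have h2 : (α.val + s1) % mk = (β.val + s2) % mk := congrArg Fin.val (einjK h)
    have h3 : (β.val + s2) % mk = (α.val + (d1 + s2)) % mk := by
      calc (β.val + s2) % mk = ((α.val + d1) % mk + s2) % mk := by rw [hab2]
        _ = (α.val + d1 + s2) % mk := Nat.mod_add_mod _ _ _
        _ = (α.val + (d1 + s2)) % mk := by rw [Nat.add_assoc]
    have := mod_cancel (show s1 < mk from by omega)
      (show d1 + s2 < mk from by omega) (h2.trans h3)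
    omega
  have hf1K : eK ⟨(α.val + s1) % mk, Nat.mod_lt _ hmk0⟩ ∈ K := by
    rw [hKeq]; exact Finset.mem_image_of_mem _ (Finset.mem_univ _)
  have hf2K : eK ⟨(β.val + s2) % mk, Nat.mod_lt _ hmk0⟩ ∈ K := by
    rw [hKeq]; exact Finset.mem_image_of_mem _ (Finset.mem_univ _)
  have hf3nK : f3 ∉ K := hQnotK f3 hf3mem
  have hne13 : eK ⟨(α.val + s1) % mk, Nat.mod_lt _ hmk0⟩ ≠ f3 := fun h => hf3nK (h ▸ hf1K)
  have hne23 : eK ⟨(β.val + s2) % mk, Nat.mod_lt _ hmk0⟩ ≠ f3 := fun h => hf3nK (h ▸ hf2K)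
  have hsub3 : ({eK ⟨(α.val + s1) % mk, Nat.mod_lt _ hmk0⟩,
      eK ⟨(β.val + s2) % mk, Nat.mod_lt _ hmk0⟩, f3} : Finset E)
      ⊆ Finset.univ.filter (CrossesEdge ends X) := by
    intro z hz
    simp only [Finset.mem_insert, Finset.mem_singleton] at hz
    rcases hz with rfl | rfl | rfl
    · exact Finset.mem_filter.mpr ⟨Finset.mem_univ _, hf1cr⟩
    · exact Finset.mem_filter.mpr ⟨Finset.mem_univ _, hf2cr⟩
    · exact Finset.mem_filter.mpr ⟨Finset.mem_univ _, hf3cr⟩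
  have hcard : ({eK ⟨(α.val + s1) % mk, Nat.mod_lt _ hmk0⟩,
      eK ⟨(β.val + s2) % mk, Nat.mod_lt _ hmk0⟩, f3} : Finset E).card = 3 := by
    rw [Finset.card_insert_of_notMem (by simp [hne12, hne13]),
      Finset.card_insert_of_notMem (by simp [hne23]), Finset.card_singleton]
  have h3le : 3 ≤ cutDeg ends X := by
    have hcc := Finset.card_le_card hsub3
    rw [hcard] at hcc
    exact hcc
  omega



end Cactus

/-- Let `G = (V, E)` be a 2-edge-connected multigraph in which every 3-inseparable set
is a singleton, i.e. any two distinct nodes are separated by a cut of at most 2 edges.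
Then `G` is a cactus: every edge belongs to exactly one circuit. -/
theorem cactus_of_no_three_inseparable {V E : Type*} [Fintype V] [Fintype E]
    (ends : E → Sym2 V) (hloopless : ∀ e : E, ¬ (ends e).IsDiag)
    (hV : 2 ≤ Fintype.card V)
    (h2ec : ∀ X : Finset V, X ≠ ∅ → X ≠ Finset.univ → 2 ≤ cutDeg ends X)
    (hsep : ∀ x y : V, x ≠ y →
      ∃ X : Finset V, x ∈ X ∧ y ∉ X ∧ cutDeg ends X ≤ 2) :
    ∀ e : E, ∃! C : Finset E, IsCircuit ends C ∧ e ∈ C := by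
  intro e
  obtain ⟨C, hC, heC⟩ := Cactus.exists_circuit hloopless h2ec e
  refine ⟨C, ⟨hC, heC⟩, ?_⟩
  rintro C' ⟨hC', heC'⟩
  by_contra hne
  by_cases hsub : C' ⊆ C
  · have hns : ¬ C ⊆ C' := fun h => hne (Finset.Subset.antisymm hsub h)
    obtain ⟨f, hfC, hfC'⟩ := Finset.not_subset.mp hns
    exact Cactus.no_two hsep hC' hC heC' heC hfC hfC'
  · obtain ⟨f, hfC', hfC⟩ := Finset.not_subset.mp hsub
    exact Cactus.no_two hsep hC hC' heC heC' hfC' hfC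
end

section
/- Let (V,E) be a forest with connected components (V₁,E₁), …, (V_r,E_r), and let F be a finite multiset of unordered pairs of distinct nodes of V (links) such that (V, E ∪ F) is 2-edge-connected. Fix e ∈ E ∪ F and let C be a circuit of (V, E ∪ F) containing e that minimizes |C ∩ F| among all circuits containing e. Then for every index i such that C contains a node of V_i: the intersection C ∩ E_i is the edge set of a (possibly empty) path, and C contains either exactly one link of F with both endpoints in V_i and no link with exactly one endpoint in V_i, or exactly two links of F each having exactly one endpoint in V_i and no link with both endpoints in V_i. -/
open scoped Classical

/-- Walks in a multigraph, as lists of edges with compatible endpoints. -/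
inductive MWalk {V E : Type*} (ends : E → Sym2 V) : V → V → Type _
  | nil (v : V) : MWalk ends v v
  | cons {u v w : V} (e : E) (h : ends e = s(u, v)) (p : MWalk ends v w) :
      MWalk ends u w

namespace MWalk
variable {V E : Type*} {ends : E → Sym2 V}

/-- The list of nodes traversed by a walk. -/
def support : ∀ {u v : V}, MWalk ends u v → List V
  | _, _, nil v => [v]
  | u, _, cons _ _ p => u :: p.support

/-- The list of edges traversed by a walk. -/
def edgeList : ∀ {u v : V}, MWalk ends u v → List E
  | _, _, nil _ => []
  | _, _, cons e _ p => e :: p.edgeList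

/-- A walk is a path if it traverses no node twice. -/
def IsPath {u v : V} (p : MWalk ends u v) : Prop := p.support.Nodup

end MWalk

namespace MWalk

variable {V E : Type*} {ends : E → Sym2 V}

def append : ∀ {u v w : V}, MWalk ends u v → MWalk ends v w → MWalk ends u w
  | _, _, _, nil _, q => q
  | _, _, _, cons e h p, q => cons e h (p.append q)

@[simp] lemma edgeList_nil (v : V) : (nil v : MWalk ends v v).edgeList = [] := rfl
@[simp] lemma edgeList_cons {u v w : V} (e : E) (h : ends e = s(u, v)) (p : MWalk ends v w) :
    (cons e h p).edgeList = e :: p.edgeList := rfl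
@[simp] lemma support_nil (v : V) : (nil v : MWalk ends v v).support = [v] := rfl
@[simp] lemma support_cons {u v w : V} (e : E) (h : ends e = s(u, v)) (p : MWalk ends v w) :
    (cons e h p).support = u :: p.support := rfl

@[simp] lemma edgeList_append {u v w : V} (p : MWalk ends u v) (q : MWalk ends v w) :
    (p.append q).edgeList = p.edgeList ++ q.edgeList := by
  induction p with
  | nil v => rfl
  | cons e h p ih => simp [append, edgeList, ih]

def reverse : ∀ {u v : V}, MWalk ends u v → MWalk ends v u
  | _, _, nil v => nil v
  | _, _, cons e h p => p.reverse.append (cons e (by rw [h, Sym2.eq_swap]) (nil _))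

@[simp] lemma edgeList_reverse {u v : V} (p : MWalk ends u v) :
    ∀ g, g ∈ p.reverse.edgeList ↔ g ∈ p.edgeList := by
  induction p with
  | nil v => simp [reverse]
  | cons e h p ih => intro g; simp [reverse, edgeList, ih g, or_comm]

lemma support_length {u v : V} (p : MWalk ends u v) :
    p.support.length = p.edgeList.length + 1 := by
  induction p with
  | nil v => rfl
  | cons e h p ih => simp [support, edgeList, ih]

lemma support_ne_nil {u v : V} (p : MWalk ends u v) : p.support ≠ [] := by
  cases p <;> simp [support]

lemma support_get_zero {u v : V} (p : MWalk ends u v) (h : 0 < p.support.length) :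
    p.support.get ⟨0, h⟩ = u := by
  cases p <;> rfl

lemma support_getLast {u v : V} (p : MWalk ends u v) :
    p.support.getLast p.support_ne_nil = v := by
  induction p with
  | nil v => rfl
  | cons e h p ih =>
      show (_ :: p.support).getLast _ = _
      rw [List.getLast_cons p.support_ne_nil, ih]

lemma ends_edgeList_get {u v : V} (p : MWalk ends u v) :
    ∀ (i : ℕ) (hi : i < p.edgeList.length),
      ends (p.edgeList.get ⟨i, hi⟩) =
        s(p.support.get ⟨i, by rw [support_length]; omega⟩,
          p.support.get ⟨i + 1, by rw [support_length]; omega⟩) := by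
  induction p with
  | nil v => intro i hi; simp [edgeList] at hi
  | cons e h p ih =>
      intro i hi
      match i with
      | 0 =>
          exact h.trans (congrArg₂ (fun a b => s(a, b))
            (support_get_zero (cons e h p) (by rw [support_length]; omega)).symm
            (support_get_zero p (by rw [support_length]; omega)).symm)
      | Nat.succ j =>
          show ends (p.edgeList.get ⟨j, _⟩) = _
          rw [ih j]
          rfl

/-- extract a suffix walk starting at a given support vertex -/
lemma exists_suffix {u v : V} (p : MWalk ends u v) (x : V) (hx : x ∈ p.support) :
    ∃ q : MWalk ends x v, q.support.Sublist p.support ∧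
      ∀ g ∈ q.edgeList, g ∈ p.edgeList := by
  induction p with
  | nil v =>
      simp only [support_nil, List.mem_singleton] at hx
      subst hx
      exact ⟨nil _, List.Sublist.refl _, by simp⟩
  | @cons a b c e h p ih =>
      rcases List.mem_cons.mp hx with rfl | hx'
      · exact ⟨cons e h p, List.Sublist.refl _, fun g hg => hg⟩
      · obtain ⟨q, hs, he⟩ := ih hx'
        exact ⟨q, hs.cons _, fun g hg =>
          List.mem_cons_of_mem _ (he g hg)⟩

/-- bypass: extract a path from a walk -/
lemma exists_path {u v : V} (p : MWalk ends u v) :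
    ∃ q : MWalk ends u v, q.IsPath ∧ ∀ g ∈ q.edgeList, g ∈ p.edgeList := by
  induction p with
  | nil v => exact ⟨nil v, by simp [IsPath, support], by simp⟩
  | @cons a b c e h p ih =>
      obtain ⟨q, hq, he⟩ := ih
      by_cases ha : a ∈ q.support
      · obtain ⟨q', hs, he'⟩ := exists_suffix q a ha
        exact ⟨q', hs.nodup hq, fun g hg =>
          List.mem_cons_of_mem _ (he g (he' g hg))⟩
      · refine ⟨cons e h q, ?_, ?_⟩
        · exact List.nodup_cons.mpr ⟨ha, hq⟩
        · intro g hg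
          rcases List.mem_cons.mp hg with rfl | hg'
          · exact List.mem_cons_self
          · exact List.mem_cons_of_mem _ (he g hg')

/-- first occurrence: if an edge is in a walk, some endpoint of it is reachable
from the start by a walk avoiding that edge, with edges from the walk -/
lemma exists_prefix_avoiding {u v : V} (p : MWalk ends u v) (f : E)
    (hf : f ∈ p.edgeList) :
    ∃ c, c ∈ ends f ∧ ∃ q : MWalk ends u c, f ∉ q.edgeList ∧
      ∀ g ∈ q.edgeList, g ∈ p.edgeList := by
  induction p with
  | nil v => simp [edgeList] at hf
  | @cons a b c e h p ih =>
      by_cases hef : e = f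
      · subst hef
        refine ⟨a, ?_, nil a, by simp, by simp⟩
        rw [h]; exact Sym2.mem_mk_left _ _
      · have hf' : f ∈ p.edgeList := by
          rcases List.mem_cons.mp hf with rfl | hf' <;> [exact absurd rfl hef; exact hf']
        obtain ⟨c, hc, q, hq1, hq2⟩ := ih hf'
        exact ⟨c, hc, cons e h q, by
          simp only [edgeList, List.mem_cons]
          rintro (rfl | hmem) <;> [exact hef rfl; exact hq1 hmem],
          fun g hg => by
            rcases List.mem_cons.mp hg with rfl | hg'
            · exact List.mem_cons_self
            · exact List.mem_cons_of_mem _ (hq2 g hg')⟩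


lemma support_head_tail : ∀ {u v : V} (p : MWalk ends u v), p.support = u :: p.support.tail
  | _, _, nil v => rfl
  | _, _, cons e h p => rfl

lemma support_append {u v w : V} (p : MWalk ends u v) (q : MWalk ends v w) :
    (p.append q).support = p.support ++ q.support.tail := by
  induction p with
  | nil v => exact support_head_tail q
  | @cons a b c e h p ih => simp [append, ih]

def copy {u v u' v' : V} (p : MWalk ends u v) (hu : u = u') (hv : v = v') :
    MWalk ends u' v' := hu ▸ hv ▸ p

@[simp] lemma edgeList_copy {u v u' v' : V} (p : MWalk ends u v) (hu : u = u') (hv : v = v') :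
    (p.copy hu hv).edgeList = p.edgeList := by subst hu; subst hv; rfl

@[simp] lemma support_copy {u v u' v' : V} (p : MWalk ends u v) (hu : u = u') (hv : v = v') :
    (p.copy hu hv).support = p.support := by subst hu; subst hv; rfl

def mapEdges {E' : Type*} {ends' : E' → Sym2 V} (φ : E → E')
    (hφ : ∀ g, ends' (φ g) = ends g) :
    ∀ {u v : V}, MWalk ends u v → MWalk ends' u v
  | _, _, nil v => nil v
  | _, _, cons e h p => cons (φ e) (by rw [hφ, h]) (mapEdges φ hφ p)

@[simp] lemma edgeList_mapEdges {E' : Type*} {ends' : E' → Sym2 V} (φ : E → E')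
    (hφ : ∀ g, ends' (φ g) = ends g) {u v : V} (p : MWalk ends u v) :
    (p.mapEdges φ hφ).edgeList = p.edgeList.map φ := by
  induction p with
  | cons e h p ih => simp [mapEdges, edgeList_cons, ih]
  | nil v => rfl

lemma exists_walk_of_left {L : Type*} {endsL : L → Sym2 V} :
    ∀ {u v : V} (p : MWalk (Sum.elim ends endsL) u v),
      (∀ g ∈ p.edgeList, g.isLeft) →
      ∃ q : MWalk ends u v, q.edgeList.map Sum.inl = p.edgeList ∧ q.support = p.support
  | _, _, nil v, _ => ⟨nil v, rfl, rfl⟩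
  | _, _, cons g h p, hL => by
      obtain ⟨a, rfl⟩ : ∃ a, g = Sum.inl a := by
        have := hL g (List.mem_cons_self)
        cases g with
        | inl a => exact ⟨a, rfl⟩
        | inr b => simp at this
      obtain ⟨q, hq1, hq2⟩ := exists_walk_of_left p (fun g hg =>
        hL g (List.mem_cons_of_mem _ hg))
      exact ⟨cons a h q, by show List.map Sum.inl (a :: q.edgeList) = Sum.inl a :: p.edgeList; simp [hq1], by show _ :: q.support = _ :: p.support; rw [hq2]⟩

def segWalk {E' : Type*} {ends' : E' → Sym2 V} (vf : ℕ → V) (ef : ℕ → E')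
    (hyp : ∀ i, ends' (ef i) = s(vf i, vf (i + 1))) :
    ∀ (a k : ℕ), MWalk ends' (vf a) (vf (a + k))
  | _, 0 => nil _
  | a, k+1 => (segWalk vf ef hyp a k).append
      (cons (ef (a + k)) (hyp (a + k)) (nil (vf (a + k + 1))))

lemma segWalk_edgeList {E' : Type*} {ends' : E' → Sym2 V} (vf : ℕ → V) (ef : ℕ → E')
    (hyp : ∀ i, ends' (ef i) = s(vf i, vf (i + 1))) (a : ℕ) :
    ∀ k, (segWalk vf ef hyp a k).edgeList = (List.range k).map (fun j => ef (a + j))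
  | 0 => rfl
  | k+1 => by
      rw [segWalk, edgeList_append, segWalk_edgeList vf ef hyp a k]
      simp [List.range_succ]

lemma segWalk_support {E' : Type*} {ends' : E' → Sym2 V} (vf : ℕ → V) (ef : ℕ → E')
    (hyp : ∀ i, ends' (ef i) = s(vf i, vf (i + 1))) (a : ℕ) :
    ∀ k, (segWalk vf ef hyp a k).support = (List.range (k+1)).map (fun j => vf (a + j))
  | 0 => rfl
  | k+1 => by
      rw [segWalk, support_append, segWalk_support vf ef hyp a k]
      simp [support, List.range_succ, Nat.add_assoc]

end MWalk

open MWalk in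
lemma circuit_of_path {V E' : Type*} (ends' : E' → Sym2 V) (e₀ : E') (x y : V)
    (h₀ : ends' e₀ = s(y, x)) (hxy : x ≠ y)
    (P : MWalk ends' x y) (hP : P.IsPath) (hne : e₀ ∉ P.edgeList) :
    IsCircuit ends' (insert e₀ P.edgeList.toFinset) := by
  classical
  have hlen : P.edgeList.length ≠ 0 := by
    intro h0
    cases P with
    | nil => exact hxy rfl
    | cons e h p => simp [edgeList] at h0
  set n : ℕ := P.edgeList.length with hn
  have hslen : P.support.length = n + 1 := P.support_length
  have hm : 2 ≤ n + 1 := by omega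
  set m : ℕ := n + 1 with hmdef
  have hvlt : ∀ i : Fin m, i.val < P.support.length := fun i => by
    rw [hslen]; exact i.isLt
  have hinj : ∀ (a b : ℕ) (ha : a < P.support.length) (hb : b < P.support.length),
      P.support.get ⟨a, ha⟩ = P.support.get ⟨b, hb⟩ → a = b := by
    intro a b ha hb hab
    exact congrArg Fin.val ((List.nodup_iff_injective_get.mp hP) hab)
  have hnodupE : ∀ (i j : ℕ) (hi : i < n) (hj : j < n),
      P.edgeList.get ⟨i, by omega⟩ = P.edgeList.get ⟨j, by omega⟩ → i = j := by
    intro i j hi hj hij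
    have h1 := P.ends_edgeList_get i (by omega)
    have h2 := P.ends_edgeList_get j (by omega)
    rw [hij, h2] at h1
    rcases Sym2.eq_iff.mp h1 with ⟨ha, hb⟩ | ⟨ha, hb⟩
    · exact hinj _ _ _ _ ha.symm
    · have e1 := hinj _ _ _ _ ha.symm
      have e2 := hinj _ _ _ _ hb.symm
      omega
  refine ⟨m, hm, fun i => if h : i.val < n then P.edgeList.get ⟨i.val, by omega⟩ else e₀,
    fun i => P.support.get ⟨i.val, hvlt i⟩, ?_, ?_, ?_, ?_⟩
  · -- injectivity of the edge function
    intro i j hij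
    simp only at hij
    by_cases hi : i.val < n <;> by_cases hj : j.val < n
    · rw [dif_pos hi, dif_pos hj] at hij
      exact Fin.ext (hnodupE _ _ hi hj hij)
    · rw [dif_pos hi, dif_neg hj] at hij
      exact absurd (hij ▸ List.get_mem _ _) hne
    · rw [dif_neg hi, dif_pos hj] at hij
      exact absurd (hij.symm ▸ List.get_mem _ _) hne
    · exact Fin.ext (by omega)
  · -- injectivity of the vertex function
    intro i j hij
    simp only at hij
    exact Fin.ext (hinj _ _ _ _ hij)
  · -- compatibility
    intro i
    by_cases hi : i.val < n
    · have hmod : (i.val + 1) % m = i.val + 1 := Nat.mod_eq_of_lt (by omega)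
      simp only [dif_pos hi, hmod]
      exact P.ends_edgeList_get i.val (by omega)
    · have hieq : i.val = n := by omega
      have hmod : (i.val + 1) % m = 0 := by rw [hieq]; simp [hmdef]
      simp only [dif_neg hi, hmod, h₀]
      have hl := P.support_getLast
      rw [List.getLast_eq_getElem] at hl
      have h1 : P.support.get ⟨i.val, hvlt i⟩ = y := by
        rw [List.get_eq_getElem]
        calc P.support[i.val]'(hvlt i) = P.support[P.support.length - 1]'(by omega) := by
              congr 1
              rw [hslen]
              omega
          _ = y := hl
      have h2 : P.support.get ⟨0, hvlt ⟨0, by omega⟩⟩ = x := P.support_get_zero _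
      rw [h1, h2]
  · -- the set equality
    ext g
    simp only [Finset.mem_insert, List.mem_toFinset, Finset.mem_image, Finset.mem_univ,
      true_and]
    constructor
    · rintro (rfl | hg)
      · exact ⟨⟨n, by omega⟩, by simp⟩
      · obtain ⟨⟨k, hk⟩, hkg⟩ := List.mem_iff_get.mp hg
        exact ⟨⟨k, by omega⟩, by simp only [dif_pos (show k < n from by omega)]; exact hkg⟩
    · rintro ⟨i, rfl⟩
      by_cases hi : i.val < n
      · exact Or.inr (by rw [dif_pos hi]; exact List.get_mem _ _)
      · exact Or.inl (dif_neg hi)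



/-- Let `(V, E)` be a forest (edges `ends`) and `F` a multiset of links (`endsL`) such
that adding the links makes the graph 2-edge-connected.  Let `C` be a circuit of the
augmented graph containing a given element `e₀` and having the minimum number of links
among all circuits containing `e₀`.  Then for every connected component of the forest
(represented by a node `v`) that contains a node of `C`: the intersection of `C` with
the edges of the component is the edge set of a (possibly empty) path, and `C` contains
either exactly one link with both endpoints in the component and none with exactly one
endpoint in it, or exactly two links with exactly one endpoint in the component and
none with both endpoints in it. -/
theorem minimal_circuit_structure_on_components
    {V E L : Type*} [Fintype V] [Fintype E] [Fintype L]
    (ends : E → Sym2 V) (hloopE : ∀ e : E, ¬ (ends e).IsDiag)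
    (endsL : L → Sym2 V) (hloopL : ∀ l : L, ¬ (endsL l).IsDiag)
    (hforest : ∀ C : Finset E, ¬ IsCircuit ends C)
    (h2ec : 2 ≤ Fintype.card V ∧ ∀ X : Finset V, X ≠ ∅ → X ≠ Finset.univ →
      2 ≤ cutDeg (Sum.elim ends endsL) X)
    (C : Finset (E ⊕ L)) (hC : IsCircuit (Sum.elim ends endsL) C)
    (e₀ : E ⊕ L) (he₀ : e₀ ∈ C)
    (hmin : ∀ C' : Finset (E ⊕ L), IsCircuit (Sum.elim ends endsL) C' → e₀ ∈ C' →
      (C.filter (fun x => x.isRight)).card ≤ (C'.filter (fun x => x.isRight)).card) :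
    ∀ v : V,
      (∃ x ∈ C, ∃ w, w ∈ Sum.elim ends endsL x ∧ Nonempty (MWalk ends w v)) →
      ((∃ (a b : V) (pw : MWalk ends a b), pw.IsPath ∧
          Finset.univ.filter
            (fun e : E => Sum.inl e ∈ C ∧ ∃ w, w ∈ ends e ∧ Nonempty (MWalk ends w v))
            = pw.edgeList.toFinset) ∧
        (((Finset.univ.filter (fun l : L => Sum.inr l ∈ C ∧
              ∀ w ∈ endsL l, Nonempty (MWalk ends w v))).card = 1 ∧
          (Finset.univ.filter (fun l : L => Sum.inr l ∈ C ∧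
              (∃ w ∈ endsL l, Nonempty (MWalk ends w v)) ∧
              ¬ ∀ w ∈ endsL l, Nonempty (MWalk ends w v))).card = 0) ∨
         ((Finset.univ.filter (fun l : L => Sum.inr l ∈ C ∧
              ∀ w ∈ endsL l, Nonempty (MWalk ends w v))).card = 0 ∧
          (Finset.univ.filter (fun l : L => Sum.inr l ∈ C ∧
              (∃ w ∈ endsL l, Nonempty (MWalk ends w v)) ∧
              ¬ ∀ w ∈ endsL l, Nonempty (MWalk ends w v))).card = 2))) := by
  classical
  intro v htouch
  obtain ⟨m, hm, ce, cv, hceinj, hcvinj, hcompat, hCimg⟩ := hC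
  have hmpos : 0 < m := by omega
  obtain ⟨i₀, hi₀⟩ : ∃ i₀ : Fin m, ce i₀ = e₀ := by
    rw [hCimg] at he₀
    simpa using he₀
  set r : ℕ := i₀.val + 1 with hr
  have hrm : r ≤ m := i₀.isLt
  set vn : ℕ → V := fun j => cv ⟨(j + r) % m, Nat.mod_lt _ hmpos⟩ with hvn
  set en : ℕ → E ⊕ L := fun j => ce ⟨(j + r) % m, Nat.mod_lt _ hmpos⟩ with hen
  set R : V → Prop := fun z => Nonempty (MWalk ends z v) with hRdef
  -- index arithmetic helpers
  have hmodsmall : ∀ a : ℕ, a < 2 * m → a % m = if a < m then a else a - m := by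
    intro a ha
    by_cases h : a < m
    · rw [if_pos h, Nat.mod_eq_of_lt h]
    · rw [if_neg h, Nat.mod_eq_sub_mod (by omega), Nat.mod_eq_of_lt (by omega)]
  have hmod1 : ∀ a b : ℕ, (a % m + b) % m = (a + b) % m := by
    intro a b
    rw [Nat.add_mod a b m, Nat.add_mod (a % m) b m, Nat.mod_mod_of_dvd a (dvd_refl m)]
  have hresinj : ∀ (a x y : ℕ), x < m → y < m → (a + x) % m = (a + y) % m → x = y := by
    intro a x y hx hy hxy
    rw [Nat.add_mod a x m, Nat.add_mod a y m, Nat.mod_eq_of_lt hx, Nat.mod_eq_of_lt hy] at hxy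
    have hb : a % m < m := Nat.mod_lt _ hmpos
    rw [hmodsmall (a % m + x) (by omega), hmodsmall (a % m + y) (by omega)] at hxy
    split_ifs at hxy <;> omega
  have hvneq : ∀ j k : ℕ, j % m = k % m → vn j = vn k := by
    intro j k hjk
    simp only [hvn]
    congr 1
    exact Fin.ext (by simp only; rw [Nat.add_mod j r m, Nat.add_mod k r m, hjk])
  have heneq : ∀ j k : ℕ, j % m = k % m → en j = en k := by
    intro j k hjk
    simp only [hen]
    congr 1
    exact Fin.ext (by simp only; rw [Nat.add_mod j r m, Nat.add_mod k r m, hjk])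
  have hvninj2 : ∀ j k : ℕ, vn j = vn k → j % m = k % m := by
    intro j k hjk
    simp only [hvn] at hjk
    have hval : (j + r) % m = (k + r) % m := congrArg Fin.val (hcvinj hjk)
    have h1 : (r + j % m) % m = (r + k % m) % m := by
      rw [Nat.add_comm r (j % m), Nat.add_comm r (k % m), hmod1 j r, hmod1 k r]
      exact hval
    exact hresinj r (j % m) (k % m) (Nat.mod_lt _ hmpos) (Nat.mod_lt _ hmpos) h1
  have heninj2 : ∀ j k : ℕ, en j = en k → j % m = k % m := by
    intro j k hjk
    simp only [hen] at hjk
    have hval : (j + r) % m = (k + r) % m := congrArg Fin.val (hceinj hjk)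
    have h1 : (r + j % m) % m = (r + k % m) % m := by
      rw [Nat.add_comm r (j % m), Nat.add_comm r (k % m), hmod1 j r, hmod1 k r]
      exact hval
    exact hresinj r (j % m) (k % m) (Nat.mod_lt _ hmpos) (Nat.mod_lt _ hmpos) h1
  have henC : ∀ g, g ∈ C ↔ ∃ j, j < m ∧ en j = g := by
    letI : DecidableEq E := fun a b => Classical.propDecidable (a = b)
    letI : DecidableEq L := fun a b => Classical.propDecidable (a = b)
    letI : DecidableEq (E ⊕ L) := fun a b => Classical.propDecidable (a = b)
    intro g
    rw [hCimg]
    simp only [Finset.mem_image, Finset.mem_univ, true_and]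
    constructor
    · rintro ⟨k, rfl⟩
      refine ⟨(k.val + m - r) % m, Nat.mod_lt _ hmpos, ?_⟩
      simp only [hen]
      congr 1
      refine Fin.ext ?_
      show ((k.val + m - r) % m + r) % m = k.val
      rw [hmod1, show k.val + m - r + r = k.val + m from by omega,
        Nat.add_mod_right, Nat.mod_eq_of_lt k.isLt]
    · rintro ⟨j, hj, rfl⟩
      exact ⟨_, rfl⟩
  have hP1 : ∀ j : ℕ, Sum.elim ends endsL (en j) = s(vn j, vn (j + 1)) := by
    intro j
    have h2 : cv ⟨((j + r) % m + 1) % m, Nat.mod_lt _ hmpos⟩ = vn (j + 1) := by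
      simp only [hvn]
      congr 1
      refine Fin.ext ?_
      show ((j + r) % m + 1) % m = (j + 1 + r) % m
      rw [hmod1 (j + r) 1]
      congr 1
      omega
    simp only [hen, hvn]
    rw [hcompat ⟨(j + r) % m, Nat.mod_lt _ hmpos⟩]
    rw [h2]
  have hP4 : en (m - 1) = e₀ := by
    rw [← hi₀]
    simp only [hen]
    congr 1
    refine Fin.ext ?_
    show (m - 1 + r) % m = i₀.val
    rw [show m - 1 + r = i₀.val + m from by omega, Nat.add_mod_right,
      Nat.mod_eq_of_lt i₀.isLt]
  have hvnm : vn m = vn 0 := hvneq m 0 (by rw [Nat.mod_self, Nat.zero_mod])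
  have hends0 : Sum.elim ends endsL e₀ = s(vn (m - 1), vn 0) := by
    rw [← hP4, hP1 (m - 1), show m - 1 + 1 = m from by omega, hvnm]
  -- reachability helpers
  have hRedge : ∀ (g : E) (x y : V), ends g = s(x, y) → (R x ↔ R y) := by
    intro g x y hg
    constructor
    · rintro ⟨wk⟩
      exact ⟨MWalk.cons g (by rw [hg, Sym2.eq_swap]) wk⟩
    · rintro ⟨wk⟩
      exact ⟨MWalk.cons g hg wk⟩
  have hRwalk : ∀ (x y : V), MWalk ends x y → R x → R y := by
    rintro x y wxy ⟨wx⟩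
    exact ⟨wxy.reverse.append wx⟩
  have hconn : ∀ x y : V, R x → R y → Nonempty (MWalk ends x y) := by
    rintro x y ⟨wx⟩ ⟨wy⟩
    exact ⟨wx.append wy.reverse⟩
  have hAllLeft : ¬ (∀ g ∈ C, ¬ g.isRight) := by
    letI : DecidableEq E := fun a b => Classical.propDecidable (a = b)
    letI : DecidableEq L := fun a b => Classical.propDecidable (a = b)
    letI : DecidableEq (E ⊕ L) := fun a b => Classical.propDecidable (a = b)
    intro hall
    have hch : ∀ i : Fin m, ∃ g : E, ce i = Sum.inl g := by
      intro i
      have hmem := hall (ce i) (by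
        rw [hCimg]; exact Finset.mem_image_of_mem _ (Finset.mem_univ _))
      cases hce : ce i with
      | inl g => exact ⟨g, rfl⟩
      | inr l => rw [hce] at hmem; simp at hmem
    choose gf hgf using hch
    refine hforest _ ⟨m, hm, gf, cv, ?_, hcvinj, ?_, rfl⟩
    · intro i j hij
      exact hceinj (by rw [hgf i, hgf j, hij])
    · intro i
      have hc := hcompat i
      rw [hgf i] at hc
      exact hc
  -- the surgery lemma
  have hsurg : ∀ (p q j : ℕ), p ≤ j → j < q → q ≤ m - 1 → (en j).isRight →
      ∀ (T : MWalk (Sum.elim ends endsL) (vn p) (vn q)),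
        (∀ g ∈ T.edgeList, g.isLeft) → e₀ ∉ T.edgeList → False := by
    letI : DecidableEq E := fun a b => Classical.propDecidable (a = b)
    letI : DecidableEq L := fun a b => Classical.propDecidable (a = b)
    letI : DecidableEq (E ⊕ L) := fun a b => Classical.propDecidable (a = b)
    intro p q j hpj hjq hq hlink T hTleft hTe₀
    set W1 := (MWalk.segWalk vn en hP1 0 p).copy rfl (congrArg vn (Nat.zero_add p)) with hW1
    set W3 := (MWalk.segWalk vn en hP1 q (m - 1 - q)).copy rfl
      (congrArg vn (show q + (m - 1 - q) = m - 1 from by omega)) with hW3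
    set W' := W1.append (T.append W3) with hW'
    have hW'mem : ∀ g ∈ W'.edgeList,
        g ∈ T.edgeList ∨ ∃ i, i < m - 1 ∧ i ≠ j ∧ g = en i := by
      intro g hg
      simp only [hW', hW1, hW3, MWalk.edgeList_append, MWalk.edgeList_copy,
        MWalk.segWalk_edgeList, List.mem_append, List.mem_map, List.mem_range] at hg
      rcases hg with ⟨i, hi, rfl⟩ | hgT | ⟨i, hi, rfl⟩
      · exact Or.inr ⟨0 + i, by omega, by omega, rfl⟩
      · exact Or.inl hgT
      · exact Or.inr ⟨q + i, by omega, by omega, rfl⟩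
    have he₀W' : e₀ ∉ W'.edgeList := by
      intro hmem
      rcases hW'mem _ hmem with h | ⟨i, hi1, hi2, hi3⟩
      · exact hTe₀ h
      · have hh := heninj2 i (m - 1) (hi3.symm.trans hP4.symm)
        rw [Nat.mod_eq_of_lt (by omega), Nat.mod_eq_of_lt (by omega)] at hh
        omega
    obtain ⟨P, hPpath, hPsub⟩ := W'.exists_path
    have hxny : vn 0 ≠ vn (m - 1) := by
      intro h
      have hh := hvninj2 _ _ h
      rw [Nat.mod_eq_of_lt (by omega), Nat.mod_eq_of_lt (by omega)] at hh
      omega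
    have hcirc := circuit_of_path (Sum.elim ends endsL) e₀ (vn 0) (vn (m - 1))
      hends0 hxny P hPpath (fun h => he₀W' (hPsub _ h))
    obtain ⟨l, hl⟩ : ∃ l : L, en j = Sum.inr l := by
      cases h : en j with
      | inl g => rw [h] at hlink; simp at hlink
      | inr l => exact ⟨l, rfl⟩
    have hlC : Sum.inr l ∈ C := (henC _).mpr ⟨j, by omega, hl⟩
    have hlne₀ : Sum.inr l ≠ e₀ := by
      intro h
      have hh := heninj2 j (m - 1) (by rw [hl, h]; exact hP4.symm)
      rw [Nat.mod_eq_of_lt (by omega), Nat.mod_eq_of_lt (by omega)] at hh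
      omega
    have hsubf : (insert e₀ P.edgeList.toFinset).filter (fun x => x.isRight) ⊆
        (C.filter (fun x => x.isRight)).erase (Sum.inr l) := by
      intro g hg
      simp only [Finset.mem_filter, Finset.mem_insert, List.mem_toFinset] at hg
      obtain ⟨hg1, hg2⟩ := hg
      rw [Finset.mem_erase, Finset.mem_filter]
      rcases hg1 with rfl | hgP
      · exact ⟨fun hh => hlne₀ hh.symm, he₀, hg2⟩
      · rcases hW'mem _ (hPsub _ hgP) with hT | ⟨i, hi1, hi2, rfl⟩
        · have := hTleft _ hT
          cases g with
          | inl a => simp at hg2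
          | inr b => simp at this
        · refine ⟨?_, (henC _).mpr ⟨i, by omega, rfl⟩, hg2⟩
          intro hh
          have hij := heninj2 i j (hh.trans hl.symm)
          rw [Nat.mod_eq_of_lt (by omega), Nat.mod_eq_of_lt (by omega)] at hij
          omega
    have h1 := hmin _ hcirc (Finset.mem_insert_self _ _)
    have h2 : ((C.filter (fun x => x.isRight)).erase (Sum.inr l)).card <
        (C.filter (fun x => x.isRight)).card :=
      Finset.card_erase_lt_of_mem (Finset.mem_filter.mpr ⟨hlC, rfl⟩)
    have h3 := Finset.card_le_card hsubf
    omega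
  -- some position in the component
  have htouch' : ∃ i, i < m ∧ R (vn i) := by
    obtain ⟨x, hxC, w, hw, hRw⟩ := htouch
    obtain ⟨j, hj, rfl⟩ := (henC x).mp hxC
    rw [hP1 j] at hw
    rcases Sym2.mem_iff.mp hw with rfl | rfl
    · exact ⟨j, hj, hRw⟩
    · by_cases hj1 : j + 1 < m
      · exact ⟨j + 1, hj1, hRw⟩
      · refine ⟨0, by omega, ?_⟩
        rwa [← hvneq (j + 1) 0 (by
          rw [show j + 1 = m from by omega, Nat.mod_self, Nat.zero_mod])]
  -- membership decoding for links
  have hball : ∀ (x y : V), (∀ w ∈ s(x, y), R w) ↔ R x ∧ R y := by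
    intro x y
    constructor
    · intro h
      exact ⟨h _ (Sym2.mem_mk_left _ _), h _ (Sym2.mem_mk_right _ _)⟩
    · rintro ⟨h1, h2⟩ w hw
      rcases Sym2.mem_iff.mp hw with rfl | rfl <;> assumption
  have hbex : ∀ (x y : V), (∃ w ∈ s(x, y), R w) ↔ R x ∨ R y := by
    intro x y
    constructor
    · rintro ⟨w, hw, hR⟩
      rcases Sym2.mem_iff.mp hw with rfl | rfl
      · exact Or.inl hR
      · exact Or.inr hR
    · rintro (h | h)
      · exact ⟨x, Sym2.mem_mk_left _ _, h⟩
      · exact ⟨y, Sym2.mem_mk_right _ _, h⟩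
  have hLpos : ∀ l : L, Sum.inr l ∈ C →
      ∃ j, j < m ∧ en j = Sum.inr l ∧ endsL l = s(vn j, vn (j + 1)) := by
    intro l hl
    obtain ⟨j, hj, hej⟩ := (henC _).mp hl
    refine ⟨j, hj, hej, ?_⟩
    have := hP1 j
    rw [hej] at this
    exact this
  have hmemA : ∀ l : L, (Sum.inr l ∈ C ∧ ∀ w ∈ endsL l, R w) ↔
      ∃ j, j < m ∧ en j = Sum.inr l ∧ R (vn j) ∧ R (vn (j + 1)) := by
    intro l
    constructor
    · rintro ⟨h1, h2⟩
      obtain ⟨j, hj, hej, hEq⟩ := hLpos l h1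
      rw [hEq, hball] at h2
      exact ⟨j, hj, hej, h2⟩
    · rintro ⟨j, hj, hej, h2⟩
      have h1 : Sum.inr l ∈ C := (henC _).mpr ⟨j, hj, hej⟩
      obtain ⟨j', hj', hej', hEq⟩ := hLpos l h1
      refine ⟨h1, ?_⟩
      have hjj : j' % m = j % m := heninj2 _ _ (by rw [hej', hej])
      rw [hEq, hball]
      constructor
      · rw [hvneq j' j hjj]; exact h2.1
      · rw [hvneq (j' + 1) (j + 1) (by rw [Nat.add_mod j' 1 m, Nat.add_mod j 1 m, hjj])]
        exact h2.2
  have hmemB : ∀ l : L, (Sum.inr l ∈ C ∧ (∃ w ∈ endsL l, R w) ∧ ¬ ∀ w ∈ endsL l, R w) ↔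
      ∃ j, j < m ∧ en j = Sum.inr l ∧ (R (vn j) ∨ R (vn (j + 1))) ∧
        ¬ (R (vn j) ∧ R (vn (j + 1))) := by
    intro l
    constructor
    · rintro ⟨h1, h2, h3⟩
      obtain ⟨j, hj, hej, hEq⟩ := hLpos l h1
      rw [hEq, hbex] at h2
      rw [hEq, hball] at h3
      exact ⟨j, hj, hej, h2, h3⟩
    · rintro ⟨j, hj, hej, h2, h3⟩
      have h1 : Sum.inr l ∈ C := (henC _).mpr ⟨j, hj, hej⟩
      obtain ⟨j', hj', hej', hEq⟩ := hLpos l h1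
      have hjj : j' % m = j % m := heninj2 _ _ (by rw [hej', hej])
      have hv1 : vn j' = vn j := hvneq j' j hjj
      have hv2 : vn (j' + 1) = vn (j + 1) :=
        hvneq _ _ (by rw [Nat.add_mod j' 1 m, Nat.add_mod j 1 m, hjj])
      refine ⟨h1, ?_, ?_⟩
      · rw [hEq, hbex, hv1, hv2]; exact h2
      · rw [hEq, hball, hv1, hv2]; exact h3
  -- the path builder
  have hpathmk : ∀ (a k : ℕ), k < m →
      (∀ jj, jj < k → ¬ (en (a + jj)).isRight) →
      (∀ g : E, (Sum.inl g ∈ C ∧ ∃ w, w ∈ ends g ∧ R w) ↔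
        ∃ jj, jj < k ∧ Sum.inl g = en (a + jj)) →
      ∃ (x y : V) (pw : MWalk ends x y), pw.IsPath ∧
          Finset.univ.filter (fun g : E => Sum.inl g ∈ C ∧ ∃ w, w ∈ ends g ∧ R w)
            = pw.edgeList.toFinset := by
    intro a k hkm hleft hchar
    have hall : ∀ g ∈ (MWalk.segWalk vn en hP1 a k).edgeList, g.isLeft := by
      intro g hg
      rw [MWalk.segWalk_edgeList] at hg
      obtain ⟨jj, hjj, rfl⟩ := List.mem_map.mp hg
      have := hleft jj (List.mem_range.mp hjj)
      cases h : en (a + jj) with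
      | inl x => simp
      | inr x => rw [h] at this; simp at this
    obtain ⟨pw, hmap, hsup⟩ := MWalk.exists_walk_of_left _ hall
    refine ⟨vn a, vn (a + k), pw, ?_, ?_⟩
    · rw [MWalk.IsPath, hsup, MWalk.segWalk_support]
      refine List.Nodup.map_on ?_ (List.nodup_range)
      intro x hx y hy hxy
      have hx' := List.mem_range.mp hx
      have hy' := List.mem_range.mp hy
      exact hresinj a x y (by omega) (by omega) (hvninj2 _ _ hxy)
    · ext g
      simp only [Finset.mem_filter, Finset.mem_univ, true_and, List.mem_toFinset]
      rw [hchar g]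
      constructor
      · rintro ⟨jj, hjj, hg⟩
        have hmem : Sum.inl g ∈ pw.edgeList.map (Sum.inl : E → E ⊕ L) := by
          rw [hmap, MWalk.segWalk_edgeList]
          exact List.mem_map.mpr ⟨jj, List.mem_range.mpr hjj, hg.symm⟩
        obtain ⟨g', hg', hgg⟩ := List.mem_map.mp hmem
        cases hgg
        exact hg'
      · intro hg
        have hmem : Sum.inl g ∈ pw.edgeList.map (Sum.inl : E → E ⊕ L) := List.mem_map_of_mem hg
        rw [hmap, MWalk.segWalk_edgeList] at hmem
        obtain ⟨jj, hjj, hgg⟩ := List.mem_map.mp hmem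
        exact ⟨jj, List.mem_range.mp hjj, hgg.symm⟩
  -- card builders
  have hcard1 : ∀ (s : Finset L) (l : L), (∀ x, x ∈ s ↔ x = l) → s.card = 1 := by
    intro s l h
    rw [show s = {l} from Finset.ext (by simpa using h)]
    exact Finset.card_singleton _
  have hcard0 : ∀ (s : Finset L), (∀ x, x ∉ s) → s.card = 0 := by
    intro s h
    rw [show s = ∅ from Finset.eq_empty_of_forall_notMem h]
    exact Finset.card_empty
  have hcard2 : ∀ (s : Finset L) (l1 l2 : L), l1 ≠ l2 →
      (∀ x, x ∈ s ↔ x = l1 ∨ x = l2) → s.card = 2 := by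
    intro s l1 l2 hne h
    rw [show s = insert l1 {l2} from Finset.ext (by simpa using h)]
    rw [Finset.card_insert_of_notMem (by simpa using hne), Finset.card_singleton]
  have hcross : ∀ jj : ℕ, ¬ (R (vn jj) ↔ R (vn (jj + 1))) → ∃ l1 : L, en jj = Sum.inr l1 := by
    intro jj hnR
    cases h : en jj with
    | inr l1 => exact ⟨l1, rfl⟩
    | inl g =>
        exfalso
        have hEg : ends g = s(vn jj, vn (jj + 1)) := by
          have := hP1 jj; rw [h] at this; exact this
        exact hnR (hRedge _ _ _ hEg)
  have hmain1 : (e₀.isRight ∨ (¬ R (vn (m - 1)) ∧ ¬ R (vn 0))) → (∃ (a b : V) (pw : MWalk ends a b), pw.IsPath ∧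
          Finset.univ.filter (fun g : E => Sum.inl g ∈ C ∧ ∃ w, w ∈ ends g ∧ R w)
            = pw.edgeList.toFinset) ∧
        (((Finset.univ.filter (fun l : L => Sum.inr l ∈ C ∧ ∀ w ∈ endsL l, R w)).card = 1 ∧
          (Finset.univ.filter (fun l : L => Sum.inr l ∈ C ∧ (∃ w ∈ endsL l, R w) ∧
              ¬ ∀ w ∈ endsL l, R w)).card = 0) ∨
         ((Finset.univ.filter (fun l : L => Sum.inr l ∈ C ∧ ∀ w ∈ endsL l, R w)).card = 0 ∧
          (Finset.univ.filter (fun l : L => Sum.inr l ∈ C ∧ (∃ w ∈ endsL l, R w) ∧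
              ¬ ∀ w ∈ endsL l, R w)).card = 2)) := by
    intro hsc
    have hTok : ∀ p q : ℕ, R (vn p) → R (vn q) →
        ∃ T : MWalk (Sum.elim ends endsL) (vn p) (vn q),
          (∀ g ∈ T.edgeList, g.isLeft) ∧ e₀ ∉ T.edgeList := by
      intro p q hp hq
      obtain ⟨w0⟩ := hconn _ _ hp hq
      refine ⟨w0.mapEdges (ends := ends) Sum.inl (fun g => Sum.elim_inl ends endsL g), ?_, ?_⟩
      · intro g hg
        rw [MWalk.edgeList_mapEdges] at hg
        obtain ⟨g', _, rfl⟩ := List.mem_map.mp hg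
        simp
      · intro hmem
        rw [MWalk.edgeList_mapEdges] at hmem
        obtain ⟨g', hg', hgg⟩ := List.mem_map.mp hmem
        rcases hsc with h | ⟨h1, h2⟩
        · rw [← hgg] at h; simp at h
        · have hEg : ends g' = s(vn (m - 1), vn 0) := by
            have := hends0; rw [← hgg] at this; exact this
          obtain ⟨c, hc, q', _, _⟩ := w0.exists_prefix_avoiding g' hg'
          have hRc' : R c := hRwalk _ _ q' hp
          rw [hEg] at hc
          rcases Sym2.mem_iff.mp hc with rfl | rfl
          · exact h1 hRc'
          · exact h2 hRc'
    set S : Finset ℕ := (Finset.range m).filter (fun i => R (vn i)) with hSdef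
    have hSne : S.Nonempty := by
      obtain ⟨i, hi1, hi2⟩ := htouch'
      exact ⟨i, by simp [hSdef, Finset.mem_filter, hi1, hi2]⟩
    set u := S.min' hSne with hudef
    set w := S.max' hSne with hwdef
    have huS : u < m ∧ R (vn u) := by
      have := S.min'_mem hSne
      simp only [hSdef, Finset.mem_filter, Finset.mem_range] at this
      exact this
    have hwS : w < m ∧ R (vn w) := by
      have := S.max'_mem hSne
      simp only [hSdef, Finset.mem_filter, Finset.mem_range] at this
      exact this
    have huw : u ≤ w := S.min'_le _ (S.max'_mem hSne)
    have hbound : ∀ i, i < m → R (vn i) → u ≤ i ∧ i ≤ w := by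
      intro i him hiR
      have hiS : i ∈ S := by simp [hSdef, Finset.mem_filter, Finset.mem_range, him, hiR]
      exact ⟨S.min'_le _ hiS, S.le_max' _ hiS⟩
    have hNL : ∀ jj, u ≤ jj → jj < w → ¬ (en jj).isRight := by
      intro jj h1 h2 hlink
      obtain ⟨T, hT1, hT2⟩ := hTok u w huS.2 hwS.2
      exact hsurg u w jj h1 h2 (by omega) hlink T hT1 hT2
    have hall : ∀ i, u ≤ i → i ≤ w → R (vn i) := by
      have key : ∀ d, u + d ≤ w → R (vn (u + d)) := by
        intro d
        induction d with
        | zero => intro _; exact huS.2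
        | succ d ih =>
            intro hd
            have hR1 := ih (by omega)
            have hnl := hNL (u + d) (by omega) (by omega)
            obtain ⟨g, hg⟩ : ∃ g, en (u + d) = Sum.inl g := by
              cases h : en (u + d) with
              | inl g => exact ⟨g, rfl⟩
              | inr l => rw [h] at hnl; simp at hnl
            have hEg : ends g = s(vn (u + d), vn (u + d + 1)) := by
              have := hP1 (u + d); rw [hg] at this; exact this
            exact (hRedge _ _ _ hEg).mp hR1
      intro i h1 h2
      have := key (i - u) (by omega)
      rwa [show u + (i - u) = i from by omega] at this
    have hnotR : ∀ i, i < m → (i < u ∨ w < i) → ¬ R (vn i) := by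
      intro i him hiu hiR
      have := hbound i him hiR
      omega
    by_cases hu0 : u = 0 <;> by_cases hwm : w = m - 1
    · -- CASE A : u = 0, w = m-1 : whole circuit in the component
      have hallm : ∀ i, i < m → R (vn i) := fun i hi => hall i (by omega) (by omega)
      obtain ⟨l₀, hl₀⟩ : ∃ l₀ : L, e₀ = Sum.inr l₀ := by
        rcases hsc with h | ⟨h1, h2⟩
        · cases h' : e₀ with
          | inl g => rw [h'] at h; simp at h
          | inr l => exact ⟨l, rfl⟩
        · exact absurd (hallm 0 (by omega)) h2
      have henm1 : en (m - 1) = Sum.inr l₀ := by rw [hP4, hl₀]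
      refine ⟨?_, Or.inl ⟨?_, ?_⟩⟩
      · -- the path
        apply hpathmk 0 (m - 1) (by omega)
        · intro jj hjj
          rw [Nat.zero_add]
          exact hNL jj (by omega) (by omega)
        · intro g
          constructor
          · rintro ⟨hgC, -⟩
            obtain ⟨j, hj, hej⟩ := (henC _).mp hgC
            refine ⟨j, ?_, by rw [Nat.zero_add]; exact hej.symm⟩
            by_cases hj' : j = m - 1
            · subst hj'; rw [henm1] at hej; cases hej
            · omega
          · rintro ⟨jj, hjj, hg⟩
            rw [Nat.zero_add] at hg
            refine ⟨(henC _).mpr ⟨jj, by omega, hg.symm⟩, ?_⟩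
            have hEg : ends g = s(vn jj, vn (jj + 1)) := by
              have := hP1 jj; rw [← hg] at this; exact this
            exact ⟨vn jj, by rw [hEg]; exact Sym2.mem_mk_left _ _, hallm jj (by omega)⟩
      · -- one inside link
        apply hcard1 _ l₀
        intro x
        simp only [Finset.mem_filter, Finset.mem_univ, true_and]
        rw [hmemA x]
        constructor
        · rintro ⟨j, hj, hej, -, -⟩
          by_cases hj' : j = m - 1
          · subst hj'; rw [henm1] at hej; exact (Sum.inr.injEq _ _).mp hej.symm
          · exact absurd (by rw [hej]; rfl) (hNL j (by omega) (by omega))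
        · rintro rfl
          refine ⟨m - 1, by omega, henm1, hallm _ (by omega), ?_⟩
          rw [show m - 1 + 1 = m from by omega, hvnm]
          exact hallm 0 (by omega)
      · -- no crossing links
        apply hcard0
        intro x hx
        simp only [Finset.mem_filter, Finset.mem_univ, true_and] at hx
        rw [hmemB x] at hx
        obtain ⟨j, hj, hej, -, hnb⟩ := hx
        by_cases hj' : j = m - 1
        · subst hj'
          refine hnb ⟨hallm _ (by omega), ?_⟩
          rw [show m - 1 + 1 = m from by omega, hvnm]
          exact hallm 0 (by omega)
        · exact absurd (by rw [hej]; rfl) (hNL j (by omega) (by omega))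
    · -- CASE B : u = 0, w < m-1
      have hwm' : w < m - 1 := by omega
      have hRw1 : ¬ R (vn (w + 1)) := hnotR (w + 1) (by omega) (by omega)
      obtain ⟨l1, hl1⟩ := hcross w (by intro h; exact hRw1 (h.mp hwS.2))
      obtain ⟨l₀, hl₀⟩ : ∃ l₀ : L, e₀ = Sum.inr l₀ := by
        rcases hsc with h | ⟨h1, h2⟩
        · cases h' : e₀ with
          | inl g => rw [h'] at h; simp at h
          | inr l => exact ⟨l, rfl⟩
        · exact absurd (hall 0 (by omega) (by omega)) h2
      have henm1 : en (m - 1) = Sum.inr l₀ := by rw [hP4, hl₀]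
      have hRm1 : ¬ R (vn (m - 1)) := hnotR (m - 1) (by omega) (by omega)
      have hl1l₀ : l1 ≠ l₀ := by
        intro h
        have := heninj2 w (m - 1) (by rw [hl1, henm1, h])
        rw [Nat.mod_eq_of_lt (by omega), Nat.mod_eq_of_lt (by omega)] at this
        omega
      have hnotouch : ∀ j, w < j → j < m - 1 →
          ¬ R (vn j) ∧ ¬ R (vn (j + 1)) := by
        intro j h1 h2
        exact ⟨hnotR j (by omega) (by omega), hnotR (j + 1) (by omega) (by omega)⟩
      refine ⟨?_, Or.inr ⟨?_, ?_⟩⟩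
      · apply hpathmk 0 w (by omega)
        · intro jj hjj
          rw [Nat.zero_add]
          exact hNL jj (by omega) hjj
        · intro g
          constructor
          · rintro ⟨hgC, hto⟩
            obtain ⟨j, hj, hej⟩ := (henC _).mp hgC
            refine ⟨j, ?_, by rw [Nat.zero_add]; exact hej.symm⟩
            by_cases hjw : j < w
            · exact hjw
            exfalso
            by_cases hj1 : j = w
            · subst hj1; rw [hl1] at hej; cases hej
            by_cases hj2 : j = m - 1
            · subst hj2; rw [henm1] at hej; cases hej
            · obtain ⟨hn1, hn2⟩ := hnotouch j (by omega) (by omega)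
              obtain ⟨z, hz, hzR⟩ := hto
              have hEg : ends g = s(vn j, vn (j + 1)) := by
                have := hP1 j; rw [hej] at this; exact this
              rw [hEg] at hz
              rcases Sym2.mem_iff.mp hz with rfl | rfl
              · exact hn1 hzR
              · exact hn2 hzR
          · rintro ⟨jj, hjj, hg⟩
            rw [Nat.zero_add] at hg
            refine ⟨(henC _).mpr ⟨jj, by omega, hg.symm⟩, ?_⟩
            have hEg : ends g = s(vn jj, vn (jj + 1)) := by
              have := hP1 jj; rw [← hg] at this; exact this
            exact ⟨vn jj, by rw [hEg]; exact Sym2.mem_mk_left _ _,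
              hall jj (by omega) (by omega)⟩
      · apply hcard0
        intro x hx
        simp only [Finset.mem_filter, Finset.mem_univ, true_and] at hx
        rw [hmemA x] at hx
        obtain ⟨j, hj, hej, hr1, hr2⟩ := hx
        by_cases hjw : j < w
        · exact absurd (by rw [hej]; rfl) (hNL j (by omega) hjw)
        by_cases hj1 : j = w
        · subst hj1; exact hRw1 hr2
        by_cases hj2 : j = m - 1
        · subst hj2; exact hRm1 hr1
        · exact (hnotouch j (by omega) (by omega)).1 hr1
      · apply hcard2 _ l1 l₀ hl1l₀
        intro x
        simp only [Finset.mem_filter, Finset.mem_univ, true_and]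
        rw [hmemB x]
        constructor
        · rintro ⟨j, hj, hej, hto, hnb⟩
          by_cases hjw : j < w
          · exact absurd (by rw [hej]; rfl) (hNL j (by omega) hjw)
          by_cases hj1 : j = w
          · subst hj1
            rw [hl1] at hej
            exact Or.inl ((Sum.inr.injEq _ _).mp hej.symm)
          by_cases hj2 : j = m - 1
          · subst hj2
            rw [henm1] at hej
            exact Or.inr ((Sum.inr.injEq _ _).mp hej.symm)
          · obtain ⟨hn1, hn2⟩ := hnotouch j (by omega) (by omega)
            rcases hto with h | h
            · exact absurd h hn1
            · exact absurd h hn2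
        · rintro (rfl | rfl)
          · refine ⟨w, by omega, hl1, Or.inl hwS.2, fun hh => hRw1 hh.2⟩
          · refine ⟨m - 1, by omega, henm1, ?_, fun hh => hRm1 hh.1⟩
            refine Or.inr ?_
            rw [show m - 1 + 1 = m from by omega, hvnm]
            exact hall 0 (by omega) (by omega)
    · -- CASE C : u > 0, w = m-1
      have hu0' : 0 < u := by omega
      have hwm1R : R (vn (m - 1)) := by rw [← hwm]; exact hwS.2
      have hR0 : ¬ R (vn 0) := hnotR 0 (by omega) (by omega)
      have hRu1 : ¬ R (vn (u - 1)) := hnotR (u - 1) (by omega) (by omega)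
      obtain ⟨l1, hl1⟩ := hcross (u - 1) (by
        rw [show u - 1 + 1 = u from by omega]
        intro h
        exact hRu1 (h.mpr huS.2))
      obtain ⟨l₀, hl₀⟩ : ∃ l₀ : L, e₀ = Sum.inr l₀ := by
        rcases hsc with h | ⟨h1, h2⟩
        · cases h' : e₀ with
          | inl g => rw [h'] at h; simp at h
          | inr l => exact ⟨l, rfl⟩
        · exact absurd hwm1R h1
      have henm1 : en (m - 1) = Sum.inr l₀ := by rw [hP4, hl₀]
      have hl1l₀ : l1 ≠ l₀ := by
        intro h
        have := heninj2 (u - 1) (m - 1) (by rw [hl1, henm1, h])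
        rw [Nat.mod_eq_of_lt (by omega), Nat.mod_eq_of_lt (by omega)] at this
        omega
      have hnotouch : ∀ j, j < u - 1 → ¬ R (vn j) ∧ ¬ R (vn (j + 1)) := by
        intro j h1
        exact ⟨hnotR j (by omega) (by omega), hnotR (j + 1) (by omega) (by omega)⟩
      refine ⟨?_, Or.inr ⟨?_, ?_⟩⟩
      · apply hpathmk u (m - 1 - u) (by omega)
        · intro jj hjj
          exact hNL (u + jj) (by omega) (by omega)
        · intro g
          constructor
          · rintro ⟨hgC, hto⟩
            obtain ⟨j, hj, hej⟩ := (henC _).mp hgC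
            by_cases hju : j < u - 1
            · exfalso
              obtain ⟨hn1, hn2⟩ := hnotouch j hju
              obtain ⟨z, hz, hzR⟩ := hto
              have hEg : ends g = s(vn j, vn (j + 1)) := by
                have := hP1 j; rw [hej] at this; exact this
              rw [hEg] at hz
              rcases Sym2.mem_iff.mp hz with rfl | rfl
              · exact hn1 hzR
              · exact hn2 hzR
            by_cases hj1 : j = u - 1
            · exfalso; subst hj1; rw [hl1] at hej; cases hej
            by_cases hj2 : j = m - 1
            · exfalso; subst hj2; rw [henm1] at hej; cases hej
            · refine ⟨j - u, by omega, ?_⟩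
              rw [show u + (j - u) = j from by omega]
              exact hej.symm
          · rintro ⟨jj, hjj, hg⟩
            refine ⟨(henC _).mpr ⟨u + jj, by omega, hg.symm⟩, ?_⟩
            have hEg : ends g = s(vn (u + jj), vn (u + jj + 1)) := by
              have := hP1 (u + jj); rw [← hg] at this; exact this
            exact ⟨vn (u + jj), by rw [hEg]; exact Sym2.mem_mk_left _ _,
              hall (u + jj) (by omega) (by omega)⟩
      · apply hcard0
        intro x hx
        simp only [Finset.mem_filter, Finset.mem_univ, true_and] at hx
        rw [hmemA x] at hx
        obtain ⟨j, hj, hej, hr1, hr2⟩ := hx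
        by_cases hju : j < u - 1
        · exact (hnotouch j hju).1 hr1
        by_cases hj1 : j = u - 1
        · subst hj1; exact hRu1 hr1
        by_cases hj2 : j = m - 1
        · subst hj2
          refine absurd hr2 ?_
          rw [show m - 1 + 1 = m from by omega, hvnm]
          exact hR0
        · exact absurd (by rw [hej]; rfl) (hNL j (by omega) (by omega))
      · apply hcard2 _ l1 l₀ hl1l₀
        intro x
        simp only [Finset.mem_filter, Finset.mem_univ, true_and]
        rw [hmemB x]
        constructor
        · rintro ⟨j, hj, hej, hto, hnb⟩
          by_cases hju : j < u - 1
          · obtain ⟨hn1, hn2⟩ := hnotouch j hju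
            rcases hto with h | h
            · exact absurd h hn1
            · exact absurd h hn2
          by_cases hj1 : j = u - 1
          · subst hj1
            rw [hl1] at hej
            exact Or.inl ((Sum.inr.injEq _ _).mp hej.symm)
          by_cases hj2 : j = m - 1
          · subst hj2
            rw [henm1] at hej
            exact Or.inr ((Sum.inr.injEq _ _).mp hej.symm)
          · exact absurd (by rw [hej]; rfl) (hNL j (by omega) (by omega))
        · rintro (rfl | rfl)
          · refine ⟨u - 1, by omega, hl1, ?_, ?_⟩
            · refine Or.inr ?_
              rw [show u - 1 + 1 = u from by omega]
              exact huS.2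
            · intro hh
              exact hRu1 hh.1
          · refine ⟨m - 1, by omega, henm1, Or.inl hwm1R, ?_⟩
            intro hh
            refine hR0 ?_
            have := hh.2
            rwa [show m - 1 + 1 = m from by omega, hvnm] at this
    · -- CASE D : u > 0, w < m-1
      have hu0' : 0 < u := by omega
      have hwm' : w < m - 1 := by omega
      have hR0 : ¬ R (vn 0) := hnotR 0 (by omega) (by omega)
      have hRm1 : ¬ R (vn (m - 1)) := hnotR (m - 1) (by omega) (by omega)
      have hRu1 : ¬ R (vn (u - 1)) := hnotR (u - 1) (by omega) (by omega)
      have hRw1 : ¬ R (vn (w + 1)) := hnotR (w + 1) (by omega) (by omega)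
      obtain ⟨l1, hl1⟩ := hcross (u - 1) (by
        rw [show u - 1 + 1 = u from by omega]
        intro h
        exact hRu1 (h.mpr huS.2))
      obtain ⟨l2, hl2⟩ := hcross w (by intro h; exact hRw1 (h.mp hwS.2))
      have hl1l2 : l1 ≠ l2 := by
        intro h
        have := heninj2 (u - 1) w (by rw [hl1, hl2, h])
        rw [Nat.mod_eq_of_lt (by omega), Nat.mod_eq_of_lt (by omega)] at this
        omega
      have hnotouch : ∀ j, j < m → j ≠ m - 1 → (j < u - 1 ∨ w < j) →
          ¬ R (vn j) ∧ ¬ R (vn (j + 1)) := by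
        intro j h1 h2 h3
        exact ⟨hnotR j (by omega) (by omega), hnotR (j + 1) (by omega) (by omega)⟩
      have hm1no : ¬ R (vn (m - 1)) ∧ ¬ R (vn (m - 1 + 1)) := by
        refine ⟨hRm1, ?_⟩
        rw [show m - 1 + 1 = m from by omega, hvnm]
        exact hR0
      refine ⟨?_, Or.inr ⟨?_, ?_⟩⟩
      · apply hpathmk u (w - u) (by omega)
        · intro jj hjj
          exact hNL (u + jj) (by omega) (by omega)
        · intro g
          constructor
          · rintro ⟨hgC, hto⟩
            obtain ⟨j, hj, hej⟩ := (henC _).mp hgC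
            have hEg : ends g = s(vn j, vn (j + 1)) := by
              have := hP1 j; rw [hej] at this; exact this
            have htouchj : ¬ (¬ R (vn j) ∧ ¬ R (vn (j + 1))) := by
              rintro ⟨hn1, hn2⟩
              obtain ⟨z, hz, hzR⟩ := hto
              rw [hEg] at hz
              rcases Sym2.mem_iff.mp hz with rfl | rfl
              · exact hn1 hzR
              · exact hn2 hzR
            by_cases hj2 : j = m - 1
            · exact absurd (hj2 ▸ hm1no) htouchj
            by_cases hju : j < u - 1
            · exact absurd (hnotouch j (by omega) hj2 (Or.inl hju)) htouchj
            by_cases hjw : w < j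
            · exact absurd (hnotouch j (by omega) hj2 (Or.inr hjw)) htouchj
            by_cases hj1 : j = u - 1
            · exfalso; subst hj1; rw [hl1] at hej; cases hej
            by_cases hj3 : j = w
            · exfalso; subst hj3; rw [hl2] at hej; cases hej
            · refine ⟨j - u, by omega, ?_⟩
              rw [show u + (j - u) = j from by omega]
              exact hej.symm
          · rintro ⟨jj, hjj, hg⟩
            refine ⟨(henC _).mpr ⟨u + jj, by omega, hg.symm⟩, ?_⟩
            have hEg : ends g = s(vn (u + jj), vn (u + jj + 1)) := by
              have := hP1 (u + jj); rw [← hg] at this; exact this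
            exact ⟨vn (u + jj), by rw [hEg]; exact Sym2.mem_mk_left _ _,
              hall (u + jj) (by omega) (by omega)⟩
      · apply hcard0
        intro x hx
        simp only [Finset.mem_filter, Finset.mem_univ, true_and] at hx
        rw [hmemA x] at hx
        obtain ⟨j, hj, hej, hr1, hr2⟩ := hx
        by_cases hj2 : j = m - 1
        · subst hj2; exact hm1no.1 hr1
        by_cases hju : j < u - 1
        · exact (hnotouch j (by omega) hj2 (Or.inl hju)).1 hr1
        by_cases hjw : w < j
        · exact (hnotouch j (by omega) hj2 (Or.inr hjw)).1 hr1
        by_cases hj1 : j = u - 1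
        · subst hj1; exact hRu1 hr1
        by_cases hj3 : j = w
        · subst hj3; exact hRw1 hr2
        · exact absurd (by rw [hej]; rfl) (hNL j (by omega) (by omega))
      · apply hcard2 _ l1 l2 hl1l2
        intro x
        simp only [Finset.mem_filter, Finset.mem_univ, true_and]
        rw [hmemB x]
        constructor
        · rintro ⟨j, hj, hej, hto, hnb⟩
          have htouchj : ¬ (¬ R (vn j) ∧ ¬ R (vn (j + 1))) := by
            rintro ⟨hn1, hn2⟩
            rcases hto with h | h
            · exact hn1 h
            · exact hn2 h
          by_cases hj2 : j = m - 1
          · exact absurd (hj2 ▸ hm1no) htouchj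
          by_cases hju : j < u - 1
          · exact absurd (hnotouch j (by omega) hj2 (Or.inl hju)) htouchj
          by_cases hjw : w < j
          · exact absurd (hnotouch j (by omega) hj2 (Or.inr hjw)) htouchj
          by_cases hj1 : j = u - 1
          · subst hj1
            rw [hl1] at hej
            exact Or.inl ((Sum.inr.injEq _ _).mp hej.symm)
          by_cases hj3 : j = w
          · subst hj3
            rw [hl2] at hej
            exact Or.inr ((Sum.inr.injEq _ _).mp hej.symm)
          · exact absurd (by rw [hej]; rfl) (hNL j (by omega) (by omega))
        · rintro (rfl | rfl)
          · refine ⟨u - 1, by omega, hl1, ?_, fun hh => hRu1 hh.1⟩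
            refine Or.inr ?_
            rw [show u - 1 + 1 = u from by omega]
            exact huS.2
          · exact ⟨w, by omega, hl2, Or.inl hwS.2, fun hh => hRw1 hh.2⟩
  have hmain2 : ∀ f : E, e₀ = Sum.inl f → R (vn 0) → (∃ (a b : V) (pw : MWalk ends a b), pw.IsPath ∧
          Finset.univ.filter (fun g : E => Sum.inl g ∈ C ∧ ∃ w, w ∈ ends g ∧ R w)
            = pw.edgeList.toFinset) ∧
        (((Finset.univ.filter (fun l : L => Sum.inr l ∈ C ∧ ∀ w ∈ endsL l, R w)).card = 1 ∧
          (Finset.univ.filter (fun l : L => Sum.inr l ∈ C ∧ (∃ w ∈ endsL l, R w) ∧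
              ¬ ∀ w ∈ endsL l, R w)).card = 0) ∨
         ((Finset.univ.filter (fun l : L => Sum.inr l ∈ C ∧ ∀ w ∈ endsL l, R w)).card = 0 ∧
          (Finset.univ.filter (fun l : L => Sum.inr l ∈ C ∧ (∃ w ∈ endsL l, R w) ∧
              ¬ ∀ w ∈ endsL l, R w)).card = 2)) := by
    intro f he₀f hR0
    have hfE : ends f = s(vn (m - 1), vn 0) := by
      have := hends0; rw [he₀f] at this; exact this
    have hRm1 : R (vn (m - 1)) := (hRedge _ _ _ hfE).mpr hR0
    have henm1 : en (m - 1) = Sum.inl f := by rw [hP4, he₀f]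
    set Xp : ℕ → Prop := fun i => ∃ T : MWalk ends (vn i) (vn 0), f ∉ T.edgeList with hXpdef
    set Yp : ℕ → Prop := fun i => ∃ T : MWalk ends (vn i) (vn (m - 1)), f ∉ T.edgeList
      with hYpdef
    have hXp0 : Xp 0 := ⟨MWalk.nil _, by simp⟩
    have hYpm1 : Yp (m - 1) := ⟨MWalk.nil _, by simp⟩
    have hXpR : ∀ i, Xp i → R (vn i) := by
      rintro i ⟨T, -⟩
      exact hRwalk _ _ T.reverse hR0
    have hYpR : ∀ i, Yp i → R (vn i) := by
      rintro i ⟨T, -⟩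
      exact hRwalk _ _ T.reverse hRm1
    have hvn0m1 : vn (m - 1) ≠ vn 0 := by
      intro h
      have hh := hvninj2 _ _ h
      rw [Nat.mod_eq_of_lt (by omega), Nat.mod_eq_of_lt (by omega)] at hh
      omega
    have hXY : ∀ i, R (vn i) → Xp i ∨ Yp i := by
      intro i hi
      obtain ⟨w0⟩ := hconn (vn i) (vn 0) hi hR0
      by_cases hf0 : f ∈ w0.edgeList
      · obtain ⟨c, hc, q', hq1, -⟩ := w0.exists_prefix_avoiding f hf0
        rw [hfE] at hc
        rcases Sym2.mem_iff.mp hc with h | h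
        · subst h; exact Or.inr ⟨q', hq1⟩
        · subst h; exact Or.inl ⟨q', hq1⟩
      · exact Or.inl ⟨w0, hf0⟩
    have hnotboth : ∀ i, Xp i → Yp i → False := by
      rintro i ⟨T1, hT1⟩ ⟨T2, hT2⟩
      have hfw : f ∉ (T2.reverse.append T1).edgeList := by
        intro hmem
        rw [MWalk.edgeList_append, List.mem_append] at hmem
        rcases hmem with h | h
        · exact hT2 ((MWalk.edgeList_reverse T2 f).mp h)
        · exact hT1 h
      obtain ⟨P₀, hP₀path, hP₀sub⟩ := (T2.reverse.append T1).exists_path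
      exact hforest _ (circuit_of_path ends f (vn (m - 1)) (vn 0)
        (by rw [hfE, Sym2.eq_swap]) hvn0m1 P₀ hP₀path (fun h => hfw (hP₀sub _ h)))
    have hstep : ∀ i g, i < m - 1 → en i = Sum.inl g →
        ((Xp i ↔ Xp (i + 1)) ∧ (Yp i ↔ Yp (i + 1))) := by
      intro i g hi hig
      have hgf : g ≠ f := by
        intro h
        subst h
        have := heninj2 i (m - 1) (by rw [hig, henm1])
        rw [Nat.mod_eq_of_lt (by omega), Nat.mod_eq_of_lt (by omega)] at this
        omega
      have hEg : ends g = s(vn i, vn (i + 1)) := by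
        have := hP1 i; rw [hig] at this; exact this
      constructor
      · constructor
        · rintro ⟨T, hT⟩
          refine ⟨MWalk.cons g (by rw [hEg, Sym2.eq_swap]) T, ?_⟩
          simp only [MWalk.edgeList_cons, List.mem_cons, not_or]
          exact ⟨Ne.symm hgf, hT⟩
        · rintro ⟨T, hT⟩
          refine ⟨MWalk.cons g hEg T, ?_⟩
          simp only [MWalk.edgeList_cons, List.mem_cons, not_or]
          exact ⟨Ne.symm hgf, hT⟩
      · constructor
        · rintro ⟨T, hT⟩
          refine ⟨MWalk.cons g (by rw [hEg, Sym2.eq_swap]) T, ?_⟩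
          simp only [MWalk.edgeList_cons, List.mem_cons, not_or]
          exact ⟨Ne.symm hgf, hT⟩
        · rintro ⟨T, hT⟩
          refine ⟨MWalk.cons g hEg T, ?_⟩
          simp only [MWalk.edgeList_cons, List.mem_cons, not_or]
          exact ⟨Ne.symm hgf, hT⟩
    set SX : Finset ℕ := (Finset.range m).filter Xp with hSXdef
    set SY : Finset ℕ := (Finset.range m).filter Yp with hSYdef
    have hSXne : SX.Nonempty := ⟨0, by simp [hSXdef, Finset.mem_filter, hXp0, hmpos]⟩
    have hSYne : SY.Nonempty := ⟨m - 1, by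
      simp only [hSYdef, Finset.mem_filter, Finset.mem_range]
      exact ⟨by omega, hYpm1⟩⟩
    set wX := SX.max' hSXne with hwXdef
    set uY := SY.min' hSYne with huYdef
    have hwXm : wX < m ∧ Xp wX := by
      have := SX.max'_mem hSXne
      simp only [hSXdef, Finset.mem_filter, Finset.mem_range] at this
      exact this
    have huYm : uY < m ∧ Yp uY := by
      have := SY.min'_mem hSYne
      simp only [hSYdef, Finset.mem_filter, Finset.mem_range] at this
      exact this
    have huYb : uY ≤ m - 1 := SY.min'_le _ (by
      simp only [hSYdef, Finset.mem_filter, Finset.mem_range]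
      exact ⟨by omega, hYpm1⟩)
    have hXle : ∀ i, i < m → Xp i → i ≤ wX := by
      intro i h1 h2
      refine SX.le_max' _ ?_
      simp only [hSXdef, Finset.mem_filter, Finset.mem_range]
      exact ⟨h1, h2⟩
    have hYge : ∀ i, i < m → Yp i → uY ≤ i := by
      intro i h1 h2
      refine SY.min'_le _ ?_
      simp only [hSYdef, Finset.mem_filter, Finset.mem_range]
      exact ⟨h1, h2⟩
    have hNLX : ∀ jj, jj < wX → ¬ (en jj).isRight := by
      intro jj hjj hlink
      obtain ⟨T0, hT0⟩ := hwXm.2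
      refine hsurg 0 wX jj (by omega) hjj (by omega) hlink
        (T0.reverse.mapEdges (ends := ends) Sum.inl (fun g => Sum.elim_inl ends endsL g)) ?_ ?_
      · intro g hg
        rw [MWalk.edgeList_mapEdges] at hg
        obtain ⟨g', -, rfl⟩ := List.mem_map.mp hg
        simp
      · intro hmem
        rw [MWalk.edgeList_mapEdges] at hmem
        obtain ⟨g', hg', hgg⟩ := List.mem_map.mp hmem
        rw [he₀f] at hgg
        have : g' = f := Sum.inl.inj hgg
        subst this
        exact hT0 ((MWalk.edgeList_reverse T0 g').mp hg')
    have hNLY : ∀ jj, uY ≤ jj → jj < m - 1 → ¬ (en jj).isRight := by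
      intro jj h1 h2 hlink
      obtain ⟨T0, hT0⟩ := huYm.2
      refine hsurg uY (m - 1) jj h1 h2 (by omega) hlink
        (T0.mapEdges (ends := ends) Sum.inl (fun g => Sum.elim_inl ends endsL g)) ?_ ?_
      · intro g hg
        rw [MWalk.edgeList_mapEdges] at hg
        obtain ⟨g', -, rfl⟩ := List.mem_map.mp hg
        simp
      · intro hmem
        rw [MWalk.edgeList_mapEdges] at hmem
        obtain ⟨g', hg', hgg⟩ := List.mem_map.mp hmem
        rw [he₀f] at hgg
        have : g' = f := Sum.inl.inj hgg
        subst this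
        exact hT0 hg'
    have horder : wX < uY := by
      by_contra hcon
      push_neg at hcon
      refine hAllLeft ?_
      intro g hg
      obtain ⟨j, hj, hej⟩ := (henC _).mp hg
      subst hej
      by_cases hj1 : j = m - 1
      · subst hj1; rw [henm1]; simp
      · rcases Nat.lt_or_ge j wX with h | h
        · exact hNLX j h
        · exact hNLY j (by omega) (by omega)
    have hallX : ∀ i, i ≤ wX → Xp i := by
      have key : ∀ d, d ≤ wX → Xp d := by
        intro d
        induction d with
        | zero => intro _; exact hXp0
        | succ d ih =>
            intro hd
            have hXd := ih (by omega)
            have hnl := hNLX d (by omega)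
            obtain ⟨g, hg⟩ : ∃ g, en d = Sum.inl g := by
              cases h : en d with
              | inl g => exact ⟨g, rfl⟩
              | inr l => rw [h] at hnl; simp at hnl
            exact ((hstep d g (by omega) hg).1).mp hXd
      exact key
    have hallY : ∀ i, uY ≤ i → i ≤ m - 1 → Yp i := by
      have key : ∀ d, d ≤ m - 1 - uY → Yp (m - 1 - d) := by
        intro d
        induction d with
        | zero => intro _; exact hYpm1
        | succ d ih =>
            intro hd
            have hYd := ih (by omega)
            have hnl := hNLY (m - 1 - (d + 1)) (by omega) (by omega)
            obtain ⟨g, hg⟩ : ∃ g, en (m - 1 - (d + 1)) = Sum.inl g := by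
              cases h : en (m - 1 - (d + 1)) with
              | inl g => exact ⟨g, rfl⟩
              | inr l => rw [h] at hnl; simp at hnl
            have hiff := (hstep (m - 1 - (d + 1)) g (by omega) hg).2
            rw [show m - 1 - (d + 1) + 1 = m - 1 - d from by omega] at hiff
            exact hiff.mpr hYd
      intro i h1 h2
      have := key (m - 1 - i) (by omega)
      rwa [show m - 1 - (m - 1 - i) = i from by omega] at this
    have hmidn : ∀ i, wX < i → i < uY → ¬ R (vn i) := by
      intro i h1 h2 hiR
      rcases hXY i hiR with h | h
      · exact absurd (hXle i (by omega) h) (by omega)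
      · exact absurd (hYge i (by omega) h) (by omega)
    have hRX : ∀ i, i ≤ wX → R (vn i) := fun i hi => hXpR i (hallX i hi)
    have hRY : ∀ i, uY ≤ i → i ≤ m - 1 → R (vn i) := fun i h1 h2 => hYpR i (hallY i h1 h2)
    -- the path : from uY around through m-1 to wX
    have hk : m - uY + wX < m := by omega
    have hpath : ∃ (a b : V) (pw : MWalk ends a b), pw.IsPath ∧
        Finset.univ.filter (fun g : E => Sum.inl g ∈ C ∧ ∃ w, w ∈ ends g ∧ R w)
          = pw.edgeList.toFinset := by
      apply hpathmk uY (m - uY + wX) hk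
      · intro jj hjj
        rcases Nat.lt_or_ge (uY + jj) m with h | h
        · by_cases h2 : uY + jj = m - 1
          · rw [h2, henm1]; simp
          · exact hNLY (uY + jj) (by omega) (by omega)
        · have hrew : en (uY + jj) = en (uY + jj - m) := heneq _ _ (by
            have hmr := Nat.add_mod_right (uY + jj - m) m
            rw [show uY + jj - m + m = uY + jj from by omega] at hmr
            exact hmr)
          rw [hrew]
          exact hNLX (uY + jj - m) (by omega)
      · intro g
        constructor
        · rintro ⟨hgC, hto⟩
          obtain ⟨j, hj, hej⟩ := (henC _).mp hgC
          have hEg : ends g = s(vn j, vn (j + 1)) := by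
            have := hP1 j; rw [hej] at this; exact this
          have htouchj : R (vn j) ∨ R (vn (j + 1)) := by
            obtain ⟨z, hz, hzR⟩ := hto
            rw [hEg] at hz
            rcases Sym2.mem_iff.mp hz with rfl | rfl
            · exact Or.inl hzR
            · exact Or.inr hzR
          have hjrange : j < wX ∨ uY ≤ j := by
            by_contra hcon
            push_neg at hcon
            obtain ⟨hc1, hc2⟩ := hcon
            -- j ∈ [wX, uY-1]
            rcases htouchj with h | h
            · by_cases hjw : j = wX
              · -- R (vn wX) fine, but edge wX: check whether inl is possible
                subst hjw
                -- en wX = inl g : then Xp wX ↔ Xp (wX+1) ; leads to contradiction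
                have hiff := (hstep wX g (by omega) hej).1
                have hX1 : Xp (wX + 1) := hiff.mp hwXm.2
                have h1 : wX + 1 ≤ wX := hXle (wX + 1) (by omega) hX1
                omega
              · exact hmidn j (by omega) (by omega) h
            · by_cases hju : j + 1 = uY
              · -- en (uY - 1) = inl g : Yp transfer contradiction
                have hiff := (hstep j g (by omega) hej).2
                have hY1 : Yp j := hiff.mpr (by rw [hju]; exact hallY uY (by omega) (by omega))
                have h1 : uY ≤ j := hYge j (by omega) hY1
                omega
              · exact hmidn (j + 1) (by omega) (by omega) h
          rcases hjrange with h | h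
          · refine ⟨j + (m - uY), by omega, ?_⟩
            rw [show uY + (j + (m - uY)) = j + m from by omega]
            rw [heneq (j + m) j (by rw [Nat.add_mod_right])]
            exact hej.symm
          · refine ⟨j - uY, by omega, ?_⟩
            rw [show uY + (j - uY) = j from by omega]
            exact hej.symm
        · rintro ⟨jj, hjj, hg⟩
          have hEg : ends g = s(vn (uY + jj), vn (uY + jj + 1)) := by
            have := hP1 (uY + jj); rw [← hg] at this; exact this
          have hgC : Sum.inl g ∈ C := by
            rcases Nat.lt_or_ge (uY + jj) m with h | h
            · exact (henC _).mpr ⟨uY + jj, h, hg.symm⟩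
            · refine (henC _).mpr ⟨uY + jj - m, by omega, ?_⟩
              rw [← heneq (uY + jj) (uY + jj - m) (by
                have hmr := Nat.add_mod_right (uY + jj - m) m
                rw [show uY + jj - m + m = uY + jj from by omega] at hmr
                exact hmr)]
              exact hg.symm
          refine ⟨hgC, vn (uY + jj), by rw [hEg]; exact Sym2.mem_mk_left _ _, ?_⟩
          rcases Nat.lt_or_ge (uY + jj) m with h | h
          · exact hRY (uY + jj) (by omega) (by omega)
          · rw [hvneq (uY + jj) (uY + jj - m) (by
              have hmr := Nat.add_mod_right (uY + jj - m) m
              rw [show uY + jj - m + m = uY + jj from by omega] at hmr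
              exact hmr)]
            exact hRX (uY + jj - m) (by omega)
    by_cases huv : uY = wX + 1
    · -- exactly one link, inside the component
      have hlinkX : (en wX).isRight := by
        by_contra hnl
        obtain ⟨g, hg⟩ : ∃ g, en wX = Sum.inl g := by
          cases h : en wX with
          | inl g => exact ⟨g, rfl⟩
          | inr l => rw [h] at hnl; simp at hnl
        have hiff := (hstep wX g (by omega) hg).1
        have hX1 : Xp (wX + 1) := hiff.mp hwXm.2
        exact hnotboth (wX + 1) hX1 (by rw [← huv]; exact hallY uY (by omega) (by omega))
      obtain ⟨l1, hl1⟩ : ∃ l1 : L, en wX = Sum.inr l1 := by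
        cases h : en wX with
        | inl g => rw [h] at hlinkX; simp at hlinkX
        | inr l => exact ⟨l, rfl⟩
      have hothers : ∀ j, j < m → j ≠ wX → ¬ (en j).isRight := by
        intro j h1 h2 hlink
        by_cases hj1 : j = m - 1
        · subst hj1; rw [henm1] at hlink; simp at hlink
        · rcases Nat.lt_or_ge j wX with h | h
          · exact hNLX j h hlink
          · exact hNLY j (by omega) (by omega) hlink
      refine ⟨hpath, Or.inl ⟨?_, ?_⟩⟩
      · apply hcard1 _ l1
        intro x
        simp only [Finset.mem_filter, Finset.mem_univ, true_and]
        rw [hmemA x]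
        constructor
        · rintro ⟨j, hj, hej, -, -⟩
          by_cases hjw : j = wX
          · subst hjw; rw [hl1] at hej; exact ((Sum.inr.injEq _ _).mp hej.symm)
          · exact absurd (by rw [hej]; rfl) (hothers j hj hjw)
        · rintro rfl
          refine ⟨wX, by omega, hl1, hRX wX (by omega), ?_⟩
          rw [show wX + 1 = uY from huv.symm]
          exact hRY uY (by omega) (by omega)
      · apply hcard0
        intro x hx
        simp only [Finset.mem_filter, Finset.mem_univ, true_and] at hx
        rw [hmemB x] at hx
        obtain ⟨j, hj, hej, -, hnb⟩ := hx
        by_cases hjw : j = wX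
        · subst hjw
          refine hnb ⟨hRX wX (by omega), ?_⟩
          rw [show wX + 1 = uY from huv.symm]
          exact hRY uY (by omega) (by omega)
        · exact absurd (by rw [hej]; rfl) (hothers j hj hjw)
    · -- two crossing links
      have huv' : wX + 1 < uY := by omega
      have hlinkX : (en wX).isRight := by
        by_contra hnl
        obtain ⟨g, hg⟩ : ∃ g, en wX = Sum.inl g := by
          cases h : en wX with
          | inl g => exact ⟨g, rfl⟩
          | inr l => rw [h] at hnl; simp at hnl
        have hiff := (hstep wX g (by omega) hg).1
        have hX1 : Xp (wX + 1) := hiff.mp hwXm.2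
        have := hXle (wX + 1) (by omega) hX1
        omega
      have hlinkY : (en (uY - 1)).isRight := by
        by_contra hnl
        obtain ⟨g, hg⟩ : ∃ g, en (uY - 1) = Sum.inl g := by
          cases h : en (uY - 1) with
          | inl g => exact ⟨g, rfl⟩
          | inr l => rw [h] at hnl; simp at hnl
        have hiff := (hstep (uY - 1) g (by omega) hg).2
        have hY1 : Yp (uY - 1) := by
          refine hiff.mpr ?_
          rw [show uY - 1 + 1 = uY from by omega]
          exact hallY uY (by omega) (by omega)
        have := hYge (uY - 1) (by omega) hY1
        omega
      obtain ⟨l1, hl1⟩ : ∃ l1 : L, en wX = Sum.inr l1 := by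
        cases h : en wX with
        | inl g => rw [h] at hlinkX; simp at hlinkX
        | inr l => exact ⟨l, rfl⟩
      obtain ⟨l2, hl2⟩ : ∃ l2 : L, en (uY - 1) = Sum.inr l2 := by
        cases h : en (uY - 1) with
        | inl g => rw [h] at hlinkY; simp at hlinkY
        | inr l => exact ⟨l, rfl⟩
      have hl1l2 : l1 ≠ l2 := by
        intro h
        have := heninj2 wX (uY - 1) (by rw [hl1, hl2, h])
        rw [Nat.mod_eq_of_lt (by omega), Nat.mod_eq_of_lt (by omega)] at this
        omega
      have hothers : ∀ j, j < m → j ≠ wX → j ≠ uY - 1 → (en j).isRight →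
          ¬ R (vn j) ∧ ¬ R (vn (j + 1)) := by
        intro j h1 h2 h3 hlink
        by_cases hj1 : j = m - 1
        · subst hj1; rw [henm1] at hlink; simp at hlink
        rcases Nat.lt_or_ge j wX with h | h
        · exact absurd hlink (hNLX j h)
        rcases Nat.lt_or_ge j uY with h' | h'
        · -- wX ≤ j < uY, j ≠ wX, j ≠ uY-1 : middle, no touch
          refine ⟨hmidn j (by omega) (by omega), hmidn (j + 1) (by omega) (by omega)⟩
        · exact absurd hlink (hNLY j (by omega) (by omega))
      refine ⟨hpath, Or.inr ⟨?_, ?_⟩⟩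
      · apply hcard0
        intro x hx
        simp only [Finset.mem_filter, Finset.mem_univ, true_and] at hx
        rw [hmemA x] at hx
        obtain ⟨j, hj, hej, hr1, hr2⟩ := hx
        by_cases hjw : j = wX
        · subst hjw
          exact hmidn (wX + 1) (by omega) (by omega) hr2
        by_cases hju : j = uY - 1
        · subst hju
          exact hmidn (uY - 1) (by omega) (by omega) hr1
        · exact (hothers j hj hjw hju (by rw [hej]; rfl)).1 hr1
      · apply hcard2 _ l1 l2 hl1l2
        intro x
        simp only [Finset.mem_filter, Finset.mem_univ, true_and]
        rw [hmemB x]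
        constructor
        · rintro ⟨j, hj, hej, hto, -⟩
          by_cases hjw : j = wX
          · subst hjw; rw [hl1] at hej; exact Or.inl ((Sum.inr.injEq _ _).mp hej.symm)
          by_cases hju : j = uY - 1
          · subst hju; rw [hl2] at hej; exact Or.inr ((Sum.inr.injEq _ _).mp hej.symm)
          · obtain ⟨hn1, hn2⟩ := hothers j hj hjw hju (by rw [hej]; rfl)
            rcases hto with h | h
            · exact absurd h hn1
            · exact absurd h hn2
        · rintro (rfl | rfl)
          · refine ⟨wX, by omega, hl1, Or.inl (hRX wX (by omega)), ?_⟩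
            intro hh
            exact hmidn (wX + 1) (by omega) (by omega) hh.2
          · refine ⟨uY - 1, by omega, hl2, ?_, ?_⟩
            · refine Or.inr ?_
              rw [show uY - 1 + 1 = uY from by omega]
              exact hRY uY (by omega) (by omega)
            · intro hh
              exact hmidn (uY - 1) (by omega) (by omega) hh.1
  -- final dispatch
  try simp only [Finset.filter_congr_decidable]
  cases he0c : e₀ with
  | inl f =>
      by_cases hR0 : R (vn 0)
      · exact hmain2 f he0c hR0
      · refine hmain1 (Or.inr ⟨?_, hR0⟩)
        have hfE : ends f = s(vn (m - 1), vn 0) := by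
          have := hends0; rw [he0c] at this; exact this
        intro hRm
        exact hR0 ((hRedge _ _ _ hfE).mp hRm)
  | inr l₀ => exact hmain1 (Or.inl (by rw [he0c]; rfl))
end
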